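/- arXiv:1809.03989 — 6 statements merged into one kernel-verified Lean document; each statement's English description precedes it below -/
import Mathlib

section
/- No overcrowding (Lemma 2.16): fix β > 0 and a bounded Borel set Λ ⊆ ℝ. For every ε > 0 there exists p₀ (depending on β, Λ, ε) such that for every integer p ≥ p₀ and every integer n ≥ p with Λ ⊆ Λ_n, one has Q_{n,β}({x ∈ Λ_n^n : N_Λ(x) ≤ p and N_{Λ_p}(x) ≤ p²}) ≥ 1 − ε. -/
open MeasureTheory Real Filter Topology
open scoped ENNReal Classical BigOperators

noncomputable section

/-- `Lam m` is the interval `Λ_m = [-m/2, m/2]`. -/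
def Lam (m : ℝ) : Set ℝ := Set.Icc (-(m / 2)) (m / 2)

/-- The `n`-periodic logarithmic potential `g_n`. -/
def gper (n : ℕ) (x : ℝ) : ℝ :=
  if Real.sin (Real.pi * x / n) ≠ 0 then -Real.log |2 * Real.sin (Real.pi * x / n)| else 0

/-- The logarithmic potential `g`. -/
def glog (x : ℝ) : ℝ := if x ≠ 0 then -Real.log |x| else 0

/-- Pair interaction energy `Σ_{j<ℓ} φ(η_j - η_ℓ)`. -/
def pairE (φ : ℝ → ℝ) {N : ℕ} (η : Fin N → ℝ) : ℝ :=
  ∑ j : Fin N, ∑ l ∈ Finset.Ioi j, φ (η j - η l)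

/-- The cube `Λ_m^n`. -/
def cube (n : ℕ) (m : ℝ) : Set (Fin n → ℝ) := Set.pi Set.univ fun _ => Lam m

/-- Partition function of the periodic log-gas (as an extended nonnegative real). -/
def QZ (β : ℝ) (n : ℕ) : ℝ≥0∞ :=
  ∫⁻ x in cube n n, ENNReal.ofReal (Real.exp (-β * pairE (gper n) x))

/-- The probability measure `Q_{n,β}` of the periodic log-gas. -/
def Qmeas (β : ℝ) (n : ℕ) : Measure (Fin n → ℝ) :=
  (QZ β n)⁻¹ •
    ((volume.restrict (cube n n)).withDensity fun x =>
      ENNReal.ofReal (Real.exp (-β * pairE (gper n) x)))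

/-- Indices of the coordinates of `x` lying in `B`. -/
def inIdx (B : Set ℝ) {n : ℕ} (x : Fin n → ℝ) : Finset (Fin n) :=
  Finset.univ.filter fun i => x i ∈ B

/-- `N_B(x)`, the number of coordinates of `x` lying in `B`. -/
def NIn (B : Set ℝ) {n : ℕ} (x : Fin n → ℝ) : ℕ := (inIdx B x).card

/-- Replace the coordinates of `x` lying in `Λ` by `η`, in increasing order of index. -/
def replaceIn (Λ : Set ℝ) {n : ℕ} (x : Fin n → ℝ) (η : Fin (NIn Λ x) → ℝ) : Fin n → ℝ :=
  fun i =>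
    if h : x i ∈ Λ then
      η (((inIdx Λ x).orderIsoOfFin rfl).symm ⟨i, by simp [inIdx, h]⟩)
    else x i

/-- Move function `M_{Λ,Λp}(η, x)` with interaction `φ`. -/
def moveF (φ : ℝ → ℝ) (Λ Λp : Set ℝ) {n : ℕ} (x : Fin n → ℝ) {N : ℕ} (η : Fin N → ℝ) : ℝ :=
  (∑ j : Fin N, ∑ i ∈ inIdx (Λp \ Λ) x, φ (η j - x i))
    - ∑ i ∈ inIdx Λ x, ∑ i' ∈ inIdx (Λp \ Λ) x, φ (x i - x i')

/-- Gibbs kernel `f_{Λ,Λp}` with interaction `φ` at inverse temperature `β`. -/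
def gibbsK (φ : ℝ → ℝ) (β : ℝ) (Λ Λp : Set ℝ) {n : ℕ}
    (f : (Fin n → ℝ) → ℝ) (x : Fin n → ℝ) : ℝ :=
  (∫ η in Set.pi Set.univ (fun _ : Fin (NIn Λ x) => Λ),
      f (replaceIn Λ x η) * Real.exp (-β * (pairE φ η + moveF φ Λ Λp x η)))
    / ∫ η in Set.pi Set.univ (fun _ : Fin (NIn Λ x) => Λ),
        Real.exp (-β * (pairE φ η + moveF φ Λ Λp x η))


lemma measurable_toIocMod {p : ℝ} (hp : 0 < p) (a : ℝ) :
    Measurable fun y : ℝ => toIocMod hp a y := by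
  have h : (fun y : ℝ => toIocMod hp a y)
      = fun y => y - ((-⌊(a + p - y) / p⌋ : ℤ) : ℝ) * p := by
    funext y
    rw [toIocMod, toIocDiv_eq_neg_floor, zsmul_eq_mul]
  rw [h]
  refine measurable_id.sub (Measurable.mul ?_ measurable_const)
  have h1 : Measurable fun y : ℝ => ⌊(a + p - y) / p⌋ :=
    Int.measurable_floor.comp ((measurable_const.sub measurable_id).div_const p)
  exact (measurable_from_top (f := (Int.cast : ℤ → ℝ))).comp h1.neg

lemma measurePreserving_toIocMod {p : ℝ} (hp : 0 < p) (a b c : ℝ) :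
    MeasurePreserving (fun t : ℝ => toIocMod hp a (c + t))
      (volume.restrict (Set.Ioc b (b + p))) (volume.restrict (Set.Ioc a (a + p))) := by
  haveI : Fact (0 < p) := ⟨hp⟩
  set e : AddCircle p → ℝ := fun q => ((AddCircle.equivIoc p a q : ℝ)) with he
  have he_meas : Measurable e :=
    measurable_subtype_coe.comp (AddCircle.measurableEquivIoc p a).measurable
  have hemk : ∀ y : ℝ, e ((y : ℝ) : AddCircle p) = toIocMod hp a y := by
    intro y
    simp only [he, AddCircle.equivIoc, QuotientAddGroup.equivIocMod_coe]
  have mp_e : MeasurePreserving e volume (volume.restrict (Set.Ioc a (a + p))) := by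
    refine ⟨he_meas, ?_⟩
    rw [← (AddCircle.measurePreserving_mk p a).map_eq,
      Measure.map_map he_meas AddCircle.measurable_mk']
    have : (e ∘ ((↑) : ℝ → AddCircle p)) =ᵐ[volume.restrict (Set.Ioc a (a + p))] id := by
      filter_upwards [ae_restrict_mem measurableSet_Ioc] with y hy
      simp only [Function.comp_apply, id_eq, hemk y]
      exact (toIocMod_eq_self hp).2 hy
    rw [Measure.map_congr this, Measure.map_id]
  have mp_add : MeasurePreserving (fun q : AddCircle p => ((c : ℝ) : AddCircle p) + q)
      volume volume := measurePreserving_add_left volume _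
  have h2 := (mp_e.comp mp_add).comp (AddCircle.measurePreserving_mk p b)
  have hfun : ((e ∘ fun q : AddCircle p => ((c : ℝ) : AddCircle p) + q) ∘ ((↑) : ℝ → AddCircle p))
      = fun t : ℝ => toIocMod hp a (c + t) := by
    funext t
    simp only [Function.comp_apply]
    rw [← hemk (c + t)]
    norm_cast
  exact hfun ▸ h2
lemma gper_add_int_mul {n : ℕ} (hn : 0 < n) (x : ℝ) (k : ℤ) :
    gper n (x + k * n) = gper n x := by
  have hn' : (n : ℝ) ≠ 0 := Nat.cast_ne_zero.2 hn.ne'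
  have harg : Real.pi * (x + k * n) / n = Real.pi * x / n + k * Real.pi := by
    field_simp
  have hsin : Real.sin (Real.pi * (x + k * n) / n)
      = (-1) ^ k * Real.sin (Real.pi * x / n) := by
    rw [harg, Real.sin_add_int_mul_pi]
  have hne : ((-1 : ℝ) ^ k) ≠ 0 := zpow_ne_zero k (by norm_num)
  unfold gper
  rw [hsin]
  by_cases hs : Real.sin (Real.pi * x / n) = 0
  · simp [hs]
  · rw [if_pos (mul_ne_zero hne hs), if_pos hs]
    congr 1
    have h1 : |((-1 : ℝ) ^ k)| = 1 := by
      rcases Int.even_or_odd k with he | ho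
      · rw [he.neg_one_zpow, abs_one]
      · rw [ho.neg_one_zpow, abs_neg, abs_one]
    rw [show (2:ℝ) * ((-1) ^ k * Real.sin (Real.pi * x / n))
        = (-1) ^ k * (2 * Real.sin (Real.pi * x / n)) by ring,
      abs_mul, h1, one_mul]

lemma gper_toIocMod_sub {n : ℕ} (hp : 0 < (n : ℝ)) (a u v : ℝ) :
    gper n (toIocMod hp a u - toIocMod hp a v) = gper n (u - v) := by
  have h : toIocMod hp a u - toIocMod hp a v
      = (u - v) + ((toIocDiv hp a v - toIocDiv hp a u : ℤ) : ℝ) * n := by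
    simp only [toIocMod, zsmul_eq_mul]
    push_cast
    ring
  rw [h, gper_add_int_mul (by exact_mod_cast hp)]

lemma measurable_gper (n : ℕ) : Measurable (gper n) := by
  unfold gper
  have hsin : Measurable fun x : ℝ => Real.sin (Real.pi * x / n) :=
    Real.measurable_sin.comp ((measurable_const.mul measurable_id).div_const _)
  refine Measurable.ite ?_ ?_ measurable_const
  · exact hsin (measurableSet_singleton 0).compl
  · exact (Real.measurable_log.comp ((measurable_const.mul hsin).abs)).neg

lemma measurable_pairE (n : ℕ) : Measurable fun x : Fin n → ℝ => pairE (gper n) x := by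
  unfold pairE
  refine Finset.measurable_sum _ fun j _ => Finset.measurable_sum _ fun l _ => ?_
  exact (measurable_gper n).comp ((measurable_pi_apply j).sub (measurable_pi_apply l))

lemma measurable_W (β : ℝ) (n : ℕ) :
    Measurable fun x : Fin n → ℝ => ENNReal.ofReal (Real.exp (-β * pairE (gper n) x)) :=
  (Real.measurable_exp.comp ((measurable_pairE n).const_mul (-β))).ennreal_ofReal

lemma NIn_cast {n : ℕ} (Λ : Set ℝ) (x : Fin n → ℝ) :
    (NIn Λ x : ℝ≥0∞) = ∑ i : Fin n, Set.indicator Λ (fun _ => (1 : ℝ≥0∞)) (x i) := by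
  rw [NIn, inIdx, Finset.card_filter]
  push_cast
  refine Finset.sum_congr rfl fun i _ => ?_
  by_cases h : x i ∈ Λ <;> simp [Set.indicator_apply, h]

lemma measurable_NInE {n : ℕ} {Λ : Set ℝ} (hΛ : MeasurableSet Λ) :
    Measurable fun x : Fin n → ℝ => (NIn Λ x : ℝ≥0∞) := by
  simp only [NIn_cast]
  refine Finset.measurable_sum _ fun i _ => ?_
  exact (measurable_const.indicator hΛ).comp (measurable_pi_apply i)

lemma restrict_pi_univ {n : ℕ} {S : Set ℝ} (hS : MeasurableSet S) :
    volume.restrict (Set.pi Set.univ fun _ : Fin n => S)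
      = Measure.pi fun _ : Fin n => volume.restrict S := by
  refine (Measure.pi_eq (μ := fun _ : Fin n => volume.restrict S) fun s hs => ?_).symm
  rw [Measure.restrict_apply (MeasurableSet.univ_pi hs), ← Set.pi_inter_distrib, volume_pi_pi]
  exact Finset.prod_congr rfl fun i _ => (Measure.restrict_apply (hs i)).symm

lemma restrict_Lam_eq (m : ℝ) :
    volume.restrict (Lam m) = volume.restrict (Set.Ioc (-(m / 2)) (-(m / 2) + m)) := by
  rw [show -(m / 2) + m = m / 2 by ring]
  exact (Measure.restrict_congr_set Ioc_ae_eq_Icc).symm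

lemma restrict_cube (n : ℕ) :
    volume.restrict (cube n n)
      = Measure.pi fun _ : Fin n =>
          volume.restrict (Set.Ioc (-((n : ℝ) / 2)) (-((n : ℝ) / 2) + n)) := by
  have hS : MeasurableSet (Lam (n : ℝ)) := measurableSet_Icc
  rw [cube, restrict_pi_univ hS]
  simp_rw [restrict_Lam_eq (n : ℝ)]
lemma ennreal_inv_mul_le_one (q : ℝ≥0∞) : q⁻¹ * q ≤ 1 := by
  rcases eq_or_ne q 0 with h | h0
  · simp [h]
  rcases eq_or_ne q ∞ with h | ht
  · simp [h]
  · rw [ENNReal.inv_mul_cancel h0 ht]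

lemma NIn_lintegral_le (β : ℝ) {n : ℕ} (hn : 0 < n) {Λ : Set ℝ} (hΛ : MeasurableSet Λ) :
    ∫⁻ x, (NIn Λ x : ℝ≥0∞) ∂(Qmeas β n) ≤ volume Λ := by
  have hp : (0 : ℝ) < (n : ℝ) := by exact_mod_cast hn
  set p : ℝ := (n : ℝ) with hpdef
  set a : ℝ := -(p / 2) with hadef
  set μ₀ : Measure (Fin n → ℝ) :=
    Measure.pi fun _ : Fin n => volume.restrict (Set.Ioc a (a + p)) with hμ₀
  have hμcube : volume.restrict (cube n n) = μ₀ := restrict_cube n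
  set W : (Fin n → ℝ) → ℝ≥0∞ :=
    fun x => ENNReal.ofReal (Real.exp (-β * pairE (gper n) x)) with hW
  have hWmeas : Measurable W := measurable_W β n
  set Nf : (Fin n → ℝ) → ℝ≥0∞ := fun x => (NIn Λ x : ℝ≥0∞) with hNf
  have hNmeas : Measurable Nf := measurable_NInE hΛ
  set S : ℝ → (Fin n → ℝ) → (Fin n → ℝ) := fun t x i => toIocMod hp a (x i + t) with hS
  have hSmp : ∀ t, MeasurePreserving (S t) μ₀ μ₀ := by
    intro t
    have h1 : ∀ _i : Fin n, MeasurePreserving (fun y : ℝ => toIocMod hp a (t + y))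
        (volume.restrict (Set.Ioc a (a + p))) (volume.restrict (Set.Ioc a (a + p))) :=
      fun _ => measurePreserving_toIocMod hp a a t
    have h2 := measurePreserving_pi _ _ h1
    have heq : (fun x : Fin n → ℝ => fun i => toIocMod hp a (t + x i)) = S t := by
      funext x i; rw [hS]; ring_nf
    rwa [heq] at h2
  have hWinv : ∀ t x, W (S t x) = W x := by
    intro t x
    have hpair : pairE (gper n) (S t x) = pairE (gper n) x := by
      unfold pairE
      apply Finset.sum_congr rfl
      intro j _
      apply Finset.sum_congr rfl
      intro l _
      have h := gper_toIocMod_sub (n := n) hp a (x j + t) (x l + t)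
      have hxy : x j + t - (x l + t) = x j - x l := by ring
      rw [hxy] at h
      simpa [hS] using h
    simp only [hW, hpair]
  set c0 : ℝ≥0∞ := volume (Λ ∩ Set.Ioc a (a + p)) with hc0
  have hind : ∀ ci : ℝ, (∫⁻ t in Set.Ioc 0 (0 + p),
      Set.indicator Λ (fun _ => (1 : ℝ≥0∞)) (toIocMod hp a (ci + t))) = c0 := by
    intro ci
    rw [(measurePreserving_toIocMod hp a 0 ci).lintegral_comp
      (measurable_const.indicator hΛ)]
    rw [lintegral_indicator hΛ, Measure.restrict_restrict hΛ, setLIntegral_one]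
  set A : ℝ≥0∞ := ∫⁻ x, Nf x * W x ∂μ₀ with hA
  set QZ' : ℝ≥0∞ := ∫⁻ x, W x ∂μ₀ with hQZ'
  have h1 : ∀ t, ∫⁻ x, Nf (S t x) * W x ∂μ₀ = A := by
    intro t
    calc ∫⁻ x, Nf (S t x) * W x ∂μ₀
        = ∫⁻ x, (fun y => Nf y * W y) (S t x) ∂μ₀ := by
          refine lintegral_congr fun x => ?_
          simp only []
          rw [hWinv t x]
      _ = A := (hSmp t).lintegral_comp (hNmeas.mul hWmeas)
  have hj : Measurable fun q : ℝ × (Fin n → ℝ) => Nf (S q.1 q.2) * W q.2 := by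
    refine Measurable.mul (f := fun q : ℝ × (Fin n → ℝ) => Nf (S q.1 q.2))
      (g := fun q : ℝ × (Fin n → ℝ) => W q.2) ?_ ?_
    · simp only [hNf, NIn_cast, hS]
      refine Finset.measurable_sum Finset.univ fun i _ => ?_
      exact (measurable_const.indicator hΛ).comp ((measurable_toIocMod hp a).comp
        (((measurable_pi_apply i).comp measurable_snd).add measurable_fst))
    · exact hWmeas.comp measurable_snd
  have hB1 : (∫⁻ t in Set.Ioc 0 (0 + p), ∫⁻ x, Nf (S t x) * W x ∂μ₀)
      = ENNReal.ofReal p * A := by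
    simp only [h1]
    rw [setLIntegral_const, Real.volume_Ioc]
    rw [show (0 : ℝ) + p - 0 = p by ring]
    ring
  have hB2 : (∫⁻ t in Set.Ioc 0 (0 + p), ∫⁻ x, Nf (S t x) * W x ∂μ₀)
      = ((n : ℝ≥0∞) * c0) * QZ' := by
    rw [lintegral_lintegral_swap hj.aemeasurable]
    have hinner : ∀ x : Fin n → ℝ,
        (∫⁻ t in Set.Ioc 0 (0 + p), Nf (S t x) * W x) = ((n : ℝ≥0∞) * c0) * W x := by
      intro x
      rw [lintegral_mul_const]
      · congr 1
        have hNS : (fun t => Nf (S t x))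
            = fun t => ∑ i : Fin n, Set.indicator Λ (fun _ => (1 : ℝ≥0∞))
                (toIocMod hp a (x i + t)) := by
          funext t
          simp only [hNf, NIn_cast, hS]
        rw [hNS]
        rw [lintegral_finset_sum]
        · simp only [hind]
          rw [Finset.sum_const, Finset.card_univ, Fintype.card_fin, nsmul_eq_mul]
        · intro i _
          exact (measurable_const.indicator hΛ).comp
            ((measurable_toIocMod hp a).comp (measurable_const.add measurable_id))
      · simp only [hNf, NIn_cast, hS]
        refine Finset.measurable_sum Finset.univ fun i _ => ?_
        exact (measurable_const.indicator hΛ).comp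
          ((measurable_toIocMod hp a).comp (measurable_const.add measurable_id))
    simp only [hinner]
    rw [lintegral_const_mul _ hWmeas]
  have hkey : ENNReal.ofReal p * A = ENNReal.ofReal p * (c0 * QZ') := by
    rw [← hB1, hB2, hpdef, ENNReal.ofReal_natCast]
    ring
  have hAeq : A = c0 * QZ' := by
    have h0 : ENNReal.ofReal p ≠ 0 := by
      rw [hpdef, ENNReal.ofReal_natCast]
      exact_mod_cast hn.ne'
    have ht : ENNReal.ofReal p ≠ ∞ := ENNReal.ofReal_ne_top
    exact (ENNReal.mul_right_inj h0 ht).1 hkey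
  -- now compute the integral against Qmeas
  have hQint : ∫⁻ x, Nf x ∂(Qmeas β n) = (QZ β n)⁻¹ * A := by
    rw [Qmeas, lintegral_smul_measure, hμcube,
      lintegral_withDensity_eq_lintegral_mul _ hWmeas hNmeas]
    congr 1
    exact lintegral_congr fun x => by rw [Pi.mul_apply, mul_comm]
  have hQZeq : QZ β n = QZ' := by
    rw [hQZ', ← hμcube]; rfl
  calc ∫⁻ x, Nf x ∂(Qmeas β n) = (QZ β n)⁻¹ * A := hQint
    _ = c0 * (QZ'⁻¹ * QZ') := by rw [hAeq, hQZeq]; ring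
    _ ≤ c0 * 1 := mul_le_mul_right (ennreal_inv_mul_le_one _) _
    _ ≤ volume Λ := by rw [mul_one]; exact measure_mono Set.inter_subset_left
lemma gper_ge_neg_log_two (n : ℕ) (y : ℝ) : -Real.log 2 ≤ gper n y := by
  unfold gper
  split_ifs with h
  · have hs1 : |Real.sin (Real.pi * y / n)| ≤ 1 :=
      abs_le.2 ⟨Real.neg_one_le_sin _, Real.sin_le_one _⟩
    have habs : |2 * Real.sin (Real.pi * y / n)| ≤ 2 := by
      rw [abs_mul, abs_of_nonneg (by norm_num : (0 : ℝ) ≤ 2)]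
      linarith
    have hpos : 0 < |2 * Real.sin (Real.pi * y / n)| :=
      abs_pos.2 (mul_ne_zero two_ne_zero h)
    have := Real.log_le_log hpos habs
    linarith
  · have : 0 < Real.log 2 := Real.log_pos (by norm_num)
    linarith

lemma pairE_ge (n : ℕ) (x : Fin n → ℝ) :
    -((n : ℝ) ^ 2 * Real.log 2) ≤ pairE (gper n) x := by
  unfold pairE
  have hlog : 0 ≤ Real.log 2 := Real.log_nonneg (by norm_num)
  have h1 : ∀ j : Fin n, -((n : ℝ) * Real.log 2) ≤ ∑ l ∈ Finset.Ioi j, gper n (x j - x l) := by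
    intro j
    have h2 : ∑ _l ∈ Finset.Ioi j, (-(Real.log 2)) ≤ ∑ l ∈ Finset.Ioi j, gper n (x j - x l) :=
      Finset.sum_le_sum fun l _ => gper_ge_neg_log_two n _
    have h3 : ∑ _l ∈ Finset.Ioi j, (-(Real.log 2))
        = -(((Finset.Ioi j).card : ℝ) * Real.log 2) := by
      rw [Finset.sum_const, nsmul_eq_mul]; ring
    have h4 : ((Finset.Ioi j).card : ℝ) ≤ (n : ℝ) := by
      have h5 : (Finset.Ioi j).card ≤ n := by
        calc (Finset.Ioi j).card ≤ Finset.univ.card := Finset.card_le_univ _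
          _ = n := by simp
      exact_mod_cast h5
    nlinarith
  calc -((n : ℝ) ^ 2 * Real.log 2) = ∑ _j : Fin n, -((n : ℝ) * Real.log 2) := by
        rw [Finset.sum_const, Finset.card_univ, Fintype.card_fin, nsmul_eq_mul]; ring
    _ ≤ _ := Finset.sum_le_sum fun j _ => h1 j

lemma volume_cube (n : ℕ) : volume (cube n n) = (ENNReal.ofReal (n : ℝ)) ^ n := by
  rw [cube, volume_pi_pi]
  have h : volume (Lam (n : ℝ)) = ENNReal.ofReal (n : ℝ) := by
    rw [Lam, Real.volume_Icc]
    congr 1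
    ring
  simp [h]

lemma QZ_lt_top (β : ℝ) (hβ : 0 < β) (n : ℕ) : QZ β n < ∞ := by
  have hbound : ∀ x : Fin n → ℝ, ENNReal.ofReal (Real.exp (-β * pairE (gper n) x))
      ≤ ENNReal.ofReal (Real.exp (β * ((n : ℝ) ^ 2 * Real.log 2))) := by
    intro x
    apply ENNReal.ofReal_le_ofReal
    apply Real.exp_le_exp.2
    nlinarith [pairE_ge n x]
  calc QZ β n ≤ ∫⁻ _x in cube n n, ENNReal.ofReal (Real.exp (β * ((n : ℝ) ^ 2 * Real.log 2))) :=
        lintegral_mono hbound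
    _ = ENNReal.ofReal (Real.exp (β * ((n : ℝ) ^ 2 * Real.log 2))) * volume (cube n n) := by
        rw [setLIntegral_const]
    _ < ∞ := ENNReal.mul_lt_top ENNReal.ofReal_lt_top
        (by rw [volume_cube]; exact ENNReal.pow_lt_top ENNReal.ofReal_lt_top)

lemma QZ_pos (β : ℝ) {n : ℕ} (hn : 0 < n) : 0 < QZ β n := by
  rw [QZ, lintegral_pos_iff_support (measurable_W β n)]
  have hsupp : (Function.support fun x : Fin n → ℝ =>
      ENNReal.ofReal (Real.exp (-β * pairE (gper n) x))) = Set.univ := by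
    ext x
    simp [Function.mem_support, ENNReal.ofReal_eq_zero, not_le, Real.exp_pos]
  rw [hsupp, Measure.restrict_apply_univ, volume_cube]
  exact ENNReal.pow_pos (ENNReal.ofReal_pos.2 (by exact_mod_cast hn)) n

lemma measurableSet_cube (n : ℕ) (m : ℝ) : MeasurableSet (cube n m) :=
  MeasurableSet.univ_pi fun _ => measurableSet_Icc

lemma Qmeas_univ_eq_one (β : ℝ) (hβ : 0 < β) {n : ℕ} (hn : 0 < n) :
    Qmeas β n Set.univ = 1 := by
  rw [Qmeas, Measure.smul_apply, smul_eq_mul,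
    withDensity_apply _ MeasurableSet.univ, Measure.restrict_univ]
  exact ENNReal.inv_mul_cancel (QZ_pos β hn).ne' (QZ_lt_top β hβ n).ne

lemma Qmeas_compl_cube (β : ℝ) (n : ℕ) : Qmeas β n (cube n (n : ℝ))ᶜ = 0 := by
  rw [Qmeas, Measure.smul_apply, smul_eq_mul,
    withDensity_apply _ (measurableSet_cube n n).compl,
    Measure.restrict_restrict (measurableSet_cube n n).compl]
  rw [Set.compl_inter_self]
  simp

lemma Qmeas_count_ge_le (β : ℝ) {n : ℕ} (hn : 0 < n) {Λ : Set ℝ} (hΛ : MeasurableSet Λ)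
    {k : ℕ} (hk : 0 < k) :
    Qmeas β n {x : Fin n → ℝ | k ≤ NIn Λ x} ≤ volume Λ / k := by
  have h := mul_meas_ge_le_lintegral (μ := Qmeas β n)
    (measurable_NInE (n := n) hΛ) (k : ℝ≥0∞)
  have hset : {x : Fin n → ℝ | (k : ℝ≥0∞) ≤ (NIn Λ x : ℝ≥0∞)} = {x | k ≤ NIn Λ x} := by
    ext x
    simp [Nat.cast_le]
  rw [hset] at h
  have h2 : (k : ℝ≥0∞) * Qmeas β n {x | k ≤ NIn Λ x} ≤ volume Λ :=
    le_trans h (NIn_lintegral_le β hn hΛ)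
  rw [ENNReal.le_div_iff_mul_le (Or.inl (by exact_mod_cast hk.ne'))
    (Or.inl (ENNReal.natCast_ne_top k))]
  rw [mul_comm]
  exact h2
/-- **No overcrowding** (Lemma 2.16). -/
theorem no_overcrowding
    (β : ℝ) (hβ : 0 < β) (Λ : Set ℝ) (hΛmeas : MeasurableSet Λ)
    (hΛbdd : Bornology.IsBounded Λ) (ε : ℝ) (hε : 0 < ε) :
    ∃ p₀ : ℕ, ∀ p : ℕ, p₀ ≤ p → ∀ n : ℕ, p ≤ n → Λ ⊆ Lam n →
      1 - ENNReal.ofReal ε ≤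
        Qmeas β n {x : Fin n → ℝ | (∀ i, x i ∈ Lam n) ∧
          NIn Λ x ≤ p ∧ NIn (Lam p) x ≤ p ^ 2} := by
  obtain ⟨r, hr⟩ := hΛbdd.subset_closedBall 0
  set R : ℝ := 2 * max r 0 + 1 with hRdef
  have hR0 : 0 ≤ R := by positivity
  have hvolΛ : volume Λ ≤ ENNReal.ofReal R := by
    have hsub : Λ ⊆ Set.Icc (-(max r 0)) (max r 0) := by
      intro y hy
      have h1 := hr hy
      rw [Real.closedBall_eq_Icc] at h1
      obtain ⟨h2, h3⟩ := h1
      constructor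
      · have : -(max r 0) ≤ 0 - r := by
          have := le_max_left r 0; linarith [le_max_left r 0]
        linarith
      · exact le_trans h3 (by linarith [le_max_left r 0])
    refine le_trans (measure_mono hsub) ?_
    rw [Real.volume_Icc]
    apply ENNReal.ofReal_le_ofReal
    linarith [le_max_right r 0]
  refine ⟨max 1 (⌈2 * (R + 1) / ε⌉₊ + 1), ?_⟩
  intro p hq n hn hΛsub
  have hp1 : 1 ≤ p := le_trans (le_max_left _ _) hq
  have hn0 : 0 < n := lt_of_lt_of_le hp1 hn
  have hP0 : (0 : ℝ) < (p : ℝ) := by exact_mod_cast hp1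
  have hpR : 2 * (R + 1) / ε ≤ (p : ℝ) := by
    have h1 : (⌈2 * (R + 1) / ε⌉₊ + 1 : ℕ) ≤ p := le_trans (le_max_right _ _) hq
    calc 2 * (R + 1) / ε ≤ (⌈2 * (R + 1) / ε⌉₊ : ℝ) := Nat.le_ceil _
      _ ≤ ((⌈2 * (R + 1) / ε⌉₊ + 1 : ℕ) : ℝ) := by push_cast; linarith
      _ ≤ (p : ℝ) := by exact_mod_cast h1
  set Q := Qmeas β n with hQdef
  set E := {x : Fin n → ℝ | (∀ i, x i ∈ Lam n) ∧ NIn Λ x ≤ p ∧ NIn (Lam p) x ≤ p ^ 2}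
    with hEdef
  have hcompl : Eᶜ ⊆ (cube n (n : ℝ))ᶜ ∪ ({x : Fin n → ℝ | p + 1 ≤ NIn Λ x}
      ∪ {x : Fin n → ℝ | p ^ 2 + 1 ≤ NIn (Lam p) x}) := by
    intro x hx
    simp only [hEdef, Set.mem_compl_iff, Set.mem_setOf_eq, not_and_or, not_forall, not_le] at hx
    rcases hx with hx | hx | hx
    · left
      intro hc
      obtain ⟨i, hi⟩ := hx
      exact hi (Set.mem_univ_pi.1 hc i)
    · right; left; exact Nat.succ_le_of_lt hx
    · right; right; exact Nat.succ_le_of_lt hx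
  have hb0 : Q (cube n (n : ℝ))ᶜ = 0 := Qmeas_compl_cube β n
  have hb1 : Q {x : Fin n → ℝ | p + 1 ≤ NIn Λ x}
      ≤ ENNReal.ofReal R / ((p + 1 : ℕ) : ℝ≥0∞) := by
    refine le_trans (Qmeas_count_ge_le β hn0 hΛmeas (Nat.succ_pos p)) ?_
    exact ENNReal.div_le_div_right hvolΛ _
  have hb2 : Q {x : Fin n → ℝ | p ^ 2 + 1 ≤ NIn (Lam p) x}
      ≤ ENNReal.ofReal (p : ℝ) / ((p ^ 2 + 1 : ℕ) : ℝ≥0∞) := by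
    have hLam : volume (Lam (p : ℝ)) = ENNReal.ofReal (p : ℝ) := by
      rw [Lam, Real.volume_Icc]
      congr 1
      ring
    refine le_trans (Qmeas_count_ge_le β hn0 (measurableSet_Icc) (Nat.succ_pos _)) ?_
    rw [show (Set.Icc (-((p : ℝ) / 2)) ((p : ℝ) / 2)) = Lam (p : ℝ) from rfl, hLam]
  have hsum : ENNReal.ofReal R / ((p + 1 : ℕ) : ℝ≥0∞)
      + ENNReal.ofReal (p : ℝ) / ((p ^ 2 + 1 : ℕ) : ℝ≥0∞) ≤ ENNReal.ofReal ε := by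
    have hd1 : (0 : ℝ) < (p : ℝ) + 1 := by linarith
    have hd2 : (0 : ℝ) < (p : ℝ) ^ 2 + 1 := by positivity
    have e1 : ((p + 1 : ℕ) : ℝ≥0∞) = ENNReal.ofReal ((p : ℝ) + 1) := by
      rw [← ENNReal.ofReal_natCast (p + 1)]
      congr 1
      push_cast
      ring
    have e2 : ((p ^ 2 + 1 : ℕ) : ℝ≥0∞) = ENNReal.ofReal ((p : ℝ) ^ 2 + 1) := by
      rw [← ENNReal.ofReal_natCast (p ^ 2 + 1)]
      congr 1
      push_cast
      ring
    rw [e1, e2, ← ENNReal.ofReal_div_of_pos hd1, ← ENNReal.ofReal_div_of_pos hd2,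
      ← ENNReal.ofReal_add (by positivity) (by positivity)]
    apply ENNReal.ofReal_le_ofReal
    -- real arithmetic
    have h2 : 2 * (R + 1) ≤ (p : ℝ) * ε := by
      rw [div_le_iff₀ hε] at hpR
      linarith
    have g1 : R / ((p : ℝ) + 1) ≤ R / (p : ℝ) :=
      div_le_div_of_nonneg_left hR0 hP0 (by linarith)
    have g2 : (p : ℝ) / ((p : ℝ) ^ 2 + 1) ≤ 1 / (p : ℝ) := by
      rw [div_le_div_iff₀ hd2 hP0]
      nlinarith
    have g3 : R / (p : ℝ) + 1 / (p : ℝ) ≤ ε / 2 := by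
      rw [← add_div, div_le_iff₀ hP0]
      nlinarith
    linarith
  have hEc : Q Eᶜ ≤ ENNReal.ofReal ε := by
    refine le_trans (measure_mono hcompl) ?_
    refine le_trans (measure_union_le _ _) ?_
    rw [hb0, zero_add]
    refine le_trans (measure_union_le _ _) ?_
    exact le_trans (add_le_add hb1 hb2) hsum
  have huniv : (1 : ℝ≥0∞) ≤ Q E + Q Eᶜ := by
    have h1 : Q Set.univ = 1 := Qmeas_univ_eq_one β hβ hn0
    calc (1 : ℝ≥0∞) = Q Set.univ := h1.symm
      _ = Q (E ∪ Eᶜ) := by rw [Set.union_compl_self]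
      _ ≤ Q E + Q Eᶜ := measure_union_le _ _
  have hfin : (1 : ℝ≥0∞) ≤ Q E + ENNReal.ofReal ε :=
    le_trans huniv (add_le_add_right hEc _)
  exact tsub_le_iff_right.2 hfin

end
end

section
/- Electrostatic potential of a point move, part (a) of Lemma 2.26: let k > 0 and Λ = [−k, k]. For every ε > 0 there exists p₀ > 0 (depending on k and ε) such that for all p ≥ p₀, all integers M ≥ 1, and all points γ_1, …, γ_M, η_1, …, η_M ∈ Λ, one has |∫_{−p/2}^{p/2} Ψ(s) ds| ≤ ε · W₁. -/
open MeasureTheory Real Filter Topology Set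
open scoped ENNReal Classical BigOperators

noncomputable section

/-- `Ψ(s) = Σ_i (log|s - γ_i| - log|s - η_i|)`. -/
def Psi {M : ℕ} (γ η : Fin M → ℝ) (s : ℝ) : ℝ :=
  ∑ i, (Real.log |s - γ i| - Real.log |s - η i|)

/-- `Ψ_n(s) = Σ_i (g_n(s - η_i) - g_n(s - γ_i))`. -/
def Psin (n : ℕ) {M : ℕ} (γ η : Fin M → ℝ) (s : ℝ) : ℝ :=
  ∑ i, (gper n (s - η i) - gper n (s - γ i))

/-- `W₁`, the minimal matching cost between the tuples `γ` and `η`. -/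
def W1 {M : ℕ} (γ η : Fin M → ℝ) : ℝ :=
  ⨅ σ : Equiv.Perm (Fin M), ∑ i, |γ i - η (σ i)|

private lemma ilog01 : IntervalIntegrable Real.log volume 0 1 := by
  have hcont : ContinuousOn (fun x : ℝ => x - x * Real.log x) (Icc 0 1) :=
    (continuous_id.sub Real.continuous_mul_log).continuousOn
  have hderiv : ∀ x ∈ Ioo (0:ℝ) 1, HasDerivAt (fun x : ℝ => x - x * Real.log x) (-Real.log x) x := by
    intro x hx
    have := (hasDerivAt_id x).sub (Real.hasDerivAt_mul_log hx.1.ne')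
    exact this.congr_deriv (by ring)
  have hpos : ∀ x ∈ Ioo (0:ℝ) 1, 0 ≤ -Real.log x := fun x hx => by
    simpa using Real.log_nonpos hx.1.le hx.2.le
  have h := intervalIntegral.integrableOn_deriv_of_nonneg hcont hderiv hpos
  rw [intervalIntegrable_iff_integrableOn_Ioc_of_le (by norm_num)]
  have heq : Real.log = fun x : ℝ => -(-Real.log x) := by funext x; ring
  rw [heq]; exact h.neg

private lemma ilog0 (a : ℝ) : IntervalIntegrable Real.log volume a 0 := by
  rcases le_or_gt a 0 with ha | ha
  · rcases eq_or_lt_of_le ha with rfl | ha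
    · exact IntervalIntegrable.refl
    · have h1 : IntervalIntegrable Real.log volume (-a) 0 := by
        have h2 : IntervalIntegrable Real.log volume 1 (-a) :=
          intervalIntegral.intervalIntegrable_log (by
            intro h; rcases Set.mem_uIcc.1 h with ⟨h1, _⟩ | ⟨_, h2⟩ <;> linarith)
        exact (ilog01.trans h2).symm
      have := (IntervalIntegrable.iff_comp_neg (by simp)).1 h1
      simp only [neg_neg, neg_zero] at this
      have heq : (fun x : ℝ => Real.log (-x)) = Real.log := by
        funext x; exact Real.log_neg_eq_log x
      rwa [heq] at this
  · rcases le_or_gt a 1 with ha1 | ha1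
    · refine (ilog01.mono_set (Set.uIcc_subset_uIcc ?_ ?_)).symm
      · exact Set.mem_uIcc.2 (Or.inl ⟨le_refl 0, by norm_num⟩)
      · exact Set.mem_uIcc.2 (Or.inl ⟨ha.le, ha1⟩)
    · have h2 : IntervalIntegrable Real.log volume 1 a :=
        intervalIntegral.intervalIntegrable_log (by
          intro h; rcases Set.mem_uIcc.1 h with ⟨h1, _⟩ | ⟨_, h2⟩ <;> linarith)
      exact (ilog01.trans h2).symm

private lemma ilog (a b : ℝ) : IntervalIntegrable Real.log volume a b :=
  (ilog0 a).trans (ilog0 b).symm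

private lemma ival0 (b : ℝ) : ∫ x in (0:ℝ)..b, Real.log x = b * Real.log b - b := by
  rcases lt_trichotomy b 0 with hb | rfl | hb
  · have h : ∫ x in b..(0:ℝ), Real.log x
        = (0 * Real.log 0 - 0) - (b * Real.log b - b) := by
      refine intervalIntegral.integral_eq_sub_of_hasDerivAt_of_le (f := fun x => x * Real.log x - x) (f' := Real.log) hb.le ((Real.continuous_mul_log.sub continuous_id).continuousOn) ?_ (ilog b 0)
      intro x hx
      have := (Real.hasDerivAt_mul_log (ne_of_lt hx.2)).sub (hasDerivAt_id x)
      exact this.congr_deriv (by ring)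
    rw [intervalIntegral.integral_symm, h]
    simp [Real.log_zero]
  · simp
  · have h : ∫ x in (0:ℝ)..b, Real.log x
        = (b * Real.log b - b) - (0 * Real.log 0 - 0) := by
      refine intervalIntegral.integral_eq_sub_of_hasDerivAt_of_le (f := fun x => x * Real.log x - x) (f' := Real.log) hb.le ((Real.continuous_mul_log.sub continuous_id).continuousOn) ?_ (ilog 0 b)
      intro x hx
      have := (Real.hasDerivAt_mul_log hx.1.ne').sub (hasDerivAt_id x)
      exact this.congr_deriv (by ring)
    rw [h]; simp [Real.log_zero]

private lemma ival (a b : ℝ) :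
    ∫ x in a..b, Real.log x = (b * Real.log b - b) - (a * Real.log a - a) := by
  have := intervalIntegral.integral_add_adjacent_intervals (ilog a 0) (ilog 0 b)
  rw [← this, ival0, intervalIntegral.integral_symm, ival0]
  ring

private lemma sum_sub_reindex {M : ℕ} (F : ℝ → ℝ) (γ η : Fin M → ℝ) (σ : Equiv.Perm (Fin M)) :
    ∑ i, (F (γ i) - F (η i)) = ∑ i, (F (γ i) - F (η (σ i))) := by
  rw [Finset.sum_sub_distrib, Finset.sum_sub_distrib,
    Equiv.sum_comp σ (fun i => F (η i))]

/-- **Electrostatic potential of a point move, part (a) of Lemma 2.26**. -/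
theorem move_potential_a
    (k : ℝ) (hk : 0 < k) (ε : ℝ) (hε : 0 < ε) :
    ∃ p₀ : ℝ, 0 < p₀ ∧ ∀ p : ℝ, p₀ ≤ p →
      ∀ M : ℕ, 1 ≤ M → ∀ γ η : Fin M → ℝ,
        (∀ i, γ i ∈ Set.Icc (-k) k) → (∀ i, η i ∈ Set.Icc (-k) k) →
        |∫ s in Set.Icc (-(p / 2)) (p / 2), Psi γ η s| ≤ ε * W1 γ η := by
  set E := Real.exp ε with hEdef
  have hE1 : 1 < E := by
    rw [hEdef, show (1:ℝ) = Real.exp 0 by simp]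
    exact Real.exp_lt_exp.2 hε
  have hE1' : 0 < E - 1 := by linarith
  refine ⟨2 * k * (E + 1) / (E - 1), by positivity, ?_⟩
  intro p hp M hM γ η hγ hη
  have h2 : 2 * k * (E + 1) ≤ p * (E - 1) := (div_le_iff₀ hE1').1 hp
  have hkb : k < p / 2 := by nlinarith
  have hbk : 0 < p / 2 - k := by linarith
  have hbk' : 0 < p / 2 + k := by linarith
  -- the Lipschitz constant
  set L := Real.log (p / 2 + k) - Real.log (p / 2 - k) with hLdef
  have hLε : L ≤ ε := by
    have hle : p / 2 + k ≤ E * (p / 2 - k) := by nlinarith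
    have := Real.log_le_log hbk' hle
    rw [Real.log_mul (by positivity) (ne_of_gt hbk), hEdef, Real.log_exp] at this
    rw [hLdef]; linarith
  have hL0 : 0 ≤ L := sub_nonneg.2 (Real.log_le_log hbk (by linarith))
  -- the antiderivative
  set F : ℝ → ℝ := fun c =>
    ((p / 2 - c) * Real.log (p / 2 - c) - (p / 2 - c)) -
      ((-(p / 2) - c) * Real.log (-(p / 2) - c) - (-(p / 2) - c)) with hFdef
  have hF : ∀ c ∈ Set.Icc (-k) k,
      HasDerivAt F (Real.log (-(p / 2) - c) - Real.log (p / 2 - c)) c := by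
    intro c hc
    have h1 : p / 2 - c ≠ 0 := by
      have := hc.2; intro h; rw [sub_eq_zero] at h; linarith
    have h2' : -(p / 2) - c ≠ 0 := by
      have := hc.1; intro h; nlinarith [sub_eq_zero.1 h]
    have d1 : HasDerivAt (fun c : ℝ => (p / 2 - c) * Real.log (p / 2 - c) - (p / 2 - c))
        (-Real.log (p / 2 - c)) c := by
      have hφ : HasDerivAt (fun x : ℝ => x * Real.log x - x) (Real.log (p / 2 - c)) (p / 2 - c) := by
        exact ((Real.hasDerivAt_mul_log h1).sub (hasDerivAt_id _)).congr_deriv (by ring)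
      have hin : HasDerivAt (fun c : ℝ => p / 2 - c) (-1) c := by
        exact ((hasDerivAt_const c (p / 2)).sub (hasDerivAt_id c)).congr_deriv (by ring)
      exact (hφ.comp c hin).congr_deriv (by ring)
    have d2 : HasDerivAt (fun c : ℝ => (-(p / 2) - c) * Real.log (-(p / 2) - c) - (-(p / 2) - c))
        (-Real.log (-(p / 2) - c)) c := by
      have hφ : HasDerivAt (fun x : ℝ => x * Real.log x - x)
          (Real.log (-(p / 2) - c)) (-(p / 2) - c) := by
        exact ((Real.hasDerivAt_mul_log h2').sub (hasDerivAt_id _)).congr_deriv (by ring)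
      have hin : HasDerivAt (fun c : ℝ => -(p / 2) - c) (-1) c := by
        exact ((hasDerivAt_const c (-(p / 2))).sub (hasDerivAt_id c)).congr_deriv (by ring)
      exact (hφ.comp c hin).congr_deriv (by ring)
    exact (d1.sub d2).congr_deriv (by ring)
  have hbound : ∀ c ∈ Set.Icc (-k) k,
      ‖Real.log (-(p / 2) - c) - Real.log (p / 2 - c)‖ ≤ L := by
    intro c hc
    have hc1 := hc.1; have hc2 := hc.2
    have e1 : Real.log (-(p / 2) - c) = Real.log (p / 2 + c) := by
      rw [show -(p / 2) - c = -(p / 2 + c) by ring, Real.log_neg_eq_log]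
    rw [e1, Real.norm_eq_abs, abs_sub_le_iff]
    have l1 : Real.log (p / 2 - k) ≤ Real.log (p / 2 + c) :=
      Real.log_le_log hbk (by linarith)
    have l2 : Real.log (p / 2 + c) ≤ Real.log (p / 2 + k) :=
      Real.log_le_log (by linarith) (by linarith)
    have l3 : Real.log (p / 2 - k) ≤ Real.log (p / 2 - c) :=
      Real.log_le_log hbk (by linarith)
    have l4 : Real.log (p / 2 - c) ≤ Real.log (p / 2 + k) :=
      Real.log_le_log (by linarith) (by linarith)
    constructor <;> rw [hLdef] <;> linarith
  have hlip : ∀ x ∈ Set.Icc (-k) k, ∀ y ∈ Set.Icc (-k) k, |F x - F y| ≤ L * |x - y| := by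
    intro x hx y hy
    have := (convex_Icc (-k) k).norm_image_sub_le_of_norm_hasDerivWithin_le
      (fun c hc => (hF c hc).hasDerivWithinAt) hbound hy hx
    simpa [Real.norm_eq_abs] using this
  -- interval integrability of log (s - c)
  have hab : -(p / 2) ≤ p / 2 := by linarith
  have ii : ∀ c : ℝ, IntervalIntegrable (fun s => Real.log (s - c)) volume (-(p / 2)) (p / 2) := by
    intro c
    simpa using (ilog (-(p / 2) - c) (p / 2 - c)).comp_sub_right c
  -- value of the integral
  have key : ∀ c : ℝ, (∫ s in (-(p / 2))..(p / 2), Real.log (s - c)) = F c := by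
    intro c
    rw [intervalIntegral.integral_comp_sub_right (fun x => Real.log x) c, ival]
  have hInt : (∫ s in Set.Icc (-(p / 2)) (p / 2), Psi γ η s) = ∑ i, (F (γ i) - F (η i)) := by
    rw [MeasureTheory.integral_Icc_eq_integral_Ioc, ← intervalIntegral.integral_of_le hab]
    have hPsi : ∀ s : ℝ, Psi γ η s
        = ∑ i, ((fun s => Real.log (s - γ i) - Real.log (s - η i)) s) := by
      intro s; simp [Psi, Real.log_abs]
    rw [intervalIntegral.integral_congr (g := fun s => ∑ i,
        ((fun s => Real.log (s - γ i) - Real.log (s - η i)) s)) (fun s _ => hPsi s)]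
    rw [intervalIntegral.integral_finset_sum (fun i _ => ((ii (γ i)).sub (ii (η i))))]
    refine Finset.sum_congr rfl fun i _ => ?_
    rw [intervalIntegral.integral_sub (ii (γ i)) (ii (η i)), key, key]
  -- optimal permutation
  obtain ⟨σ, hσ⟩ := Finite.exists_min (fun σ : Equiv.Perm (Fin M) => ∑ i, |γ i - η (σ i)|)
  have hW : W1 γ η = ∑ i, |γ i - η (σ i)| :=
    le_antisymm (ciInf_le (Finite.bddBelow_range _) σ) (le_ciInf hσ)
  have hre : ∑ i, (F (γ i) - F (η i)) = ∑ i, (F (γ i) - F (η (σ i))) :=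
    sum_sub_reindex F γ η σ
  calc |∫ s in Set.Icc (-(p / 2)) (p / 2), Psi γ η s|
      = |∑ i, (F (γ i) - F (η (σ i)))| := by rw [hInt, hre]
    _ ≤ ∑ i, |F (γ i) - F (η (σ i))| := Finset.abs_sum_le_sum_abs _ _
    _ ≤ ∑ i, L * |γ i - η (σ i)| :=
        Finset.sum_le_sum fun i _ => hlip _ (hγ i) _ (hη (σ i))
    _ ≤ ∑ i, ε * |γ i - η (σ i)| :=
        Finset.sum_le_sum fun i _ => mul_le_mul_of_nonneg_right hLε (abs_nonneg _)
    _ = ε * W1 γ η := by rw [← Finset.mul_sum, hW]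

end
end

section
/- Electrostatic potential of a point move, part (b) of Lemma 2.26: let k > 0 and Λ = [−k, k]. For every ε > 0 there exists p₀ (depending on k and ε) such that for every p ≥ p₀ there exists n₀ (depending on p) such that for every integer n ≥ n₀, every integer M ≥ 1, and all points γ_1, …, γ_M, η_1, …, η_M ∈ Λ, one has |∫_{Λ_n ∖ Λ_p} Ψ_n(s) ds| ≤ ε · (W₁ + M). -/
open MeasureTheory Real Filter Topology
open scoped ENNReal Classical BigOperators

noncomputable section

lemma sin_pi_mul_pos {n : ℕ} {x : ℝ} (h1 : 0 < x) (h2 : x < n) :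
    0 < Real.sin (Real.pi * x / n) := by
  have hn : (0:ℝ) < n := lt_trans h1 h2
  apply Real.sin_pos_of_pos_of_lt_pi
  · positivity
  · rw [div_lt_iff₀ hn]
    nlinarith [Real.pi_pos]

lemma sin_pi_ne {n : ℕ} {x : ℝ} (h1 : 0 < |x|) (h2 : |x| < n) :
    Real.sin (Real.pi * x / n) ≠ 0 := by
  rcases abs_cases x with ⟨he, _⟩ | ⟨he, _⟩
  · rw [he] at h1 h2; exact (sin_pi_mul_pos h1 h2).ne'
  · rw [he] at h1 h2
    have hpos := sin_pi_mul_pos h1 h2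
    rw [show Real.pi * -x / n = -(Real.pi * x / n) by ring, Real.sin_neg] at hpos
    intro h0; rw [h0] at hpos; simp at hpos

lemma gper_eq {n : ℕ} {x : ℝ} (h : Real.sin (Real.pi * x / n) ≠ 0) :
    gper n x = -Real.log |2 * Real.sin (Real.pi * x / n)| := if_pos h

lemma gper_congr_abs {n : ℕ} {x y : ℝ}
    (h : |Real.sin (Real.pi * x / n)| = |Real.sin (Real.pi * y / n)|) :
    gper n x = gper n y := by
  have hcond : (Real.sin (Real.pi * x / n) ≠ 0) ↔ (Real.sin (Real.pi * y / n) ≠ 0) := by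
    rw [← abs_ne_zero, h, abs_ne_zero]
  unfold gper
  split_ifs with h1 h2 h2
  · rw [abs_mul, abs_mul, h]
  · exact absurd (hcond.mp h1) h2
  · exact absurd (hcond.mpr h2) h1
  · rfl

lemma gper_neg (n : ℕ) (x : ℝ) : gper n (-x) = gper n x := by
  apply gper_congr_abs
  rw [show Real.pi * -x / n = -(Real.pi * x / n) by ring, Real.sin_neg, abs_neg]

lemma continuousAt_gper {n : ℕ} {x : ℝ} (h : Real.sin (Real.pi * x / n) ≠ 0) :
    ContinuousAt (gper n) x := by
  have hsin : Continuous (fun y : ℝ => Real.sin (Real.pi * y / n)) := by continuity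
  have hopen : IsOpen {y : ℝ | Real.sin (Real.pi * y / n) ≠ 0} :=
    isOpen_compl_singleton.preimage hsin
  have hc : ContinuousAt (fun y => -Real.log |2 * Real.sin (Real.pi * y / n)|) x := by
    apply ContinuousAt.neg
    apply ContinuousAt.comp (Real.continuousAt_log (by simpa using h))
    exact (continuous_abs.comp (continuous_const.mul hsin)).continuousAt
  apply hc.congr
  filter_upwards [hopen.mem_nhds h] with y hy
  simp only [gper, if_pos hy]

lemma abs_log_sin_sub_log_le {θ : ℝ} (h0 : 0 < θ) (h1 : θ ≤ 1) :
    |Real.log (Real.sin θ) - Real.log θ| ≤ θ^2 / 3 := by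
  have hs : 0 < Real.sin θ := Real.sin_pos_of_pos_of_lt_pi h0 (by nlinarith [Real.pi_gt_three])
  have hup : Real.log (Real.sin θ) ≤ Real.log θ := Real.log_le_log hs (Real.sin_lt h0).le
  have hθ3 : θ^3 ≤ θ := by
    nlinarith [mul_nonneg (mul_nonneg h0.le (by linarith : (0:ℝ) ≤ 1 - θ)) (by linarith : (0:ℝ) ≤ 1 + θ)]
  have hθ5 : θ^5 ≤ θ^3 := by
    nlinarith [mul_nonneg (pow_nonneg h0.le 3) (by nlinarith : (0:ℝ) ≤ 1 - θ^2)]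
  have hθ4 : 0 < θ - θ^3/4 := by linarith
  have hcube : θ - θ^3/4 < Real.sin θ := lt_of_le_of_lt (by have := pow_pos h0 3; linarith) (Real.sin_gt_sub_cube h0)
  have hexp : Real.exp (Real.log θ - θ^2/3) ≤ θ - θ^3/4 := by
    rw [Real.exp_sub, Real.exp_log h0]
    have he : θ^2/3 + 1 ≤ Real.exp (θ^2/3) := Real.add_one_le_exp _
    have hepos : 0 < Real.exp (θ^2/3) := Real.exp_pos _
    rw [div_le_iff₀ hepos]
    have hmul : (θ - θ^3/4) * (θ^2/3 + 1) ≤ (θ - θ^3/4) * Real.exp (θ^2/3) :=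
      mul_le_mul_of_nonneg_left he hθ4.le
    nlinarith [hθ5, hθ3]
  have hlow : Real.log θ - θ^2/3 ≤ Real.log (Real.sin θ) := by
    have := (Real.le_log_iff_exp_le hs).mpr (le_trans hexp hcube.le)
    exact this
  have : (0:ℝ) ≤ θ^2/3 := by positivity
  rw [abs_le]; constructor <;> linarith

set_option maxHeartbeats 1000000 in
lemma pair_estimate {n : ℕ} {k p ε : ℝ} (hk : 0 < k) (hε : 0 < ε)
    (hkp : k < p/2) (hp4 : 4*k/ε ≤ p/2 - k) (hpN : p ≤ (n:ℝ))
    (hθ1 : Real.pi * (p/2 + k) / n ≤ 1)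
    (hθ2 : (Real.pi * (p/2 + k) / n)^2 ≤ 3*ε/4)
    {γ η : ℝ} (hγ : γ ∈ Set.Icc (-k) k) (hη : η ∈ Set.Icc (-k) k) :
    |((∫ s in (-((n:ℝ)/2))..(-(p/2)), gper n (s - η)) + ∫ s in (p/2)..((n:ℝ)/2), gper n (s - η))
      - ((∫ s in (-((n:ℝ)/2))..(-(p/2)), gper n (s - γ)) + ∫ s in (p/2)..((n:ℝ)/2), gper n (s - γ))|
      ≤ ε * |η - γ| := by
  set N : ℝ := (n : ℝ) with hNdef
  have hppos : 0 < p := by nlinarith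
  have hNpos : 0 < N := lt_of_lt_of_le hppos hpN
  have hkN : k < N/2 := lt_of_lt_of_le hkp (by linarith)
  -- continuity of gper on (0, N)
  have hcont : ∀ x ∈ Set.Ioo (0:ℝ) N, ContinuousAt (gper n) x := by
    intro x hx
    exact continuousAt_gper (sin_pi_ne (by rw [abs_of_pos hx.1]; exact hx.1)
      (by rw [abs_of_pos hx.1]; exact hx.2))
  have hII : ∀ u v, u ∈ Set.Ioo (0:ℝ) N → v ∈ Set.Ioo (0:ℝ) N →
      IntervalIntegrable (gper n) volume u v := by
    intro u v hu hv
    apply ContinuousOn.intervalIntegrable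
    intro x hx
    exact (hcont x (Set.ordConnected_Ioo.uIcc_subset hu hv hx)).continuousWithinAt
  have hmemp : p/2 ∈ Set.Ioo (0:ℝ) N := ⟨by linarith, by linarith⟩
  set F : ℝ → ℝ := fun x => ∫ t in (p/2)..x, gper n t with hFdef
  have hF : ∀ x ∈ Set.Ioo (0:ℝ) N, HasDerivAt F (gper n x) x := by
    intro x hx
    exact intervalIntegral.integral_hasDerivAt_right (hII _ _ hmemp hx)
      (ContinuousAt.stronglyMeasurableAtFilter isOpen_Ioo hcont x hx) (hcont x hx)
  -- membership of the four endpoints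
  have hmem : ∀ c ∈ Set.Icc (-k) k, p/2 - c ∈ Set.Ioo (0:ℝ) N ∧ p/2 + c ∈ Set.Ioo (0:ℝ) N ∧
      N/2 - c ∈ Set.Ioo (0:ℝ) N ∧ N/2 + c ∈ Set.Ioo (0:ℝ) N := by
    intro c hc
    obtain ⟨h1, h2⟩ := hc
    refine ⟨⟨by linarith, by linarith⟩, ⟨by linarith, by linarith⟩,
      ⟨by linarith, by linarith⟩, ⟨by linarith, by linarith⟩⟩
  set T : ℝ → ℝ := fun a => F (N/2 - a) - F (p/2 - a) + (F (N/2 + a) - F (p/2 + a)) with hTdef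
  have hTderiv : ∀ a ∈ Set.Icc (-k) k,
      HasDerivAt T (gper n (p/2 - a) - gper n (p/2 + a)) a := by
    intro a ha
    obtain ⟨m1, m2, m3, m4⟩ := hmem a ha
    have i1 : HasDerivAt (fun x : ℝ => N/2 - x) (-1) a := by
      simpa using (hasDerivAt_id a).const_sub (N/2)
    have i2 : HasDerivAt (fun x : ℝ => p/2 - x) (-1) a := by
      simpa using (hasDerivAt_id a).const_sub (p/2)
    have i3 : HasDerivAt (fun x : ℝ => N/2 + x) (1:ℝ) a := by
      simpa using (hasDerivAt_id a).const_add (N/2)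
    have i4 : HasDerivAt (fun x : ℝ => p/2 + x) (1:ℝ) a := by
      simpa using (hasDerivAt_id a).const_add (p/2)
    have h1 := (hF _ m3).comp a i1
    have h2 := (hF _ m1).comp a i2
    have h3 := (hF _ m4).comp a i3
    have h4 := (hF _ m2).comp a i4
    have hcomb := (h1.sub h2).add (h3.sub h4)
    have hNa : gper n (N/2 - a) = gper n (N/2 + a) := by
      apply gper_congr_abs
      rw [show Real.pi * (N/2 - a) / n = Real.pi - Real.pi * (N/2 + a) / n by
        have hn0 : (n:ℝ) ≠ 0 := by rw [← hNdef]; exact hNpos.ne'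
        rw [hNdef, eq_sub_iff_add_eq, ← add_div, ← mul_add,
          show (n:ℝ)/2 - a + ((n:ℝ)/2 + a) = n by ring, mul_div_assoc, div_self hn0, mul_one],
        Real.sin_pi_sub]
    have hval : gper n (p/2 - a) - gper n (p/2 + a) = gper n (N / 2 - a) * -1 - gper n (p / 2 - a) * -1
        + (gper n (N / 2 + a) * 1 - gper n (p / 2 + a) * 1) := by rw [hNa]; ring
    rw [hval]; exact hcomb
  -- derivative bound
  have hbound : ∀ a ∈ Set.Icc (-k) k, |gper n (p/2 - a) - gper n (p/2 + a)| ≤ ε := by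
    intro a ha
    obtain ⟨ha1, ha2⟩ := ha
    set θm : ℝ := Real.pi * (p/2 - a) / N with hθmdef
    set θp : ℝ := Real.pi * (p/2 + a) / N with hθpdef
    set θu : ℝ := Real.pi * (p/2 + k) / N with hθudef
    set θl : ℝ := Real.pi * (p/2 - k) / N with hθldef
    have hθlpos : 0 < θl := div_pos (mul_pos Real.pi_pos (by linarith)) hNpos
    have hθmpos : 0 < θm := div_pos (mul_pos Real.pi_pos (by linarith)) hNpos
    have hθppos : 0 < θp := div_pos (mul_pos Real.pi_pos (by linarith)) hNpos
    have hθupos : 0 < θu := div_pos (mul_pos Real.pi_pos (by linarith)) hNpos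
    have hmu : θm ≤ θu := by
      apply div_le_div_of_nonneg_right ?_ hNpos.le
      have : p/2 - a ≤ p/2 + k := by linarith
      nlinarith [Real.pi_pos]
    have hpu : θp ≤ θu := by
      apply div_le_div_of_nonneg_right ?_ hNpos.le
      nlinarith [Real.pi_pos]
    have hlm : θl ≤ θm := by
      apply div_le_div_of_nonneg_right ?_ hNpos.le
      nlinarith [Real.pi_pos]
    have hlp : θl ≤ θp := by
      apply div_le_div_of_nonneg_right ?_ hNpos.le
      nlinarith [Real.pi_pos]
    have hsinm : 0 < Real.sin (Real.pi * (p/2 - a) / n) :=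
      sin_pi_mul_pos (by linarith) (by rw [← hNdef]; linarith)
    have hsinp : 0 < Real.sin (Real.pi * (p/2 + a) / n) :=
      sin_pi_mul_pos (by linarith) (by rw [← hNdef]; linarith)
    rw [gper_eq hsinm.ne', gper_eq hsinp.ne']
    rw [abs_of_pos (by linarith : (0:ℝ) < 2 * Real.sin (Real.pi * (p/2 - a) / n)),
        abs_of_pos (by linarith : (0:ℝ) < 2 * Real.sin (Real.pi * (p/2 + a) / n)),
        Real.log_mul two_ne_zero hsinm.ne', Real.log_mul two_ne_zero hsinp.ne']
    have hNn : Real.pi * (p/2 - a) / (n:ℝ) = θm := by rw [hθmdef, hNdef]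
    have hNn' : Real.pi * (p/2 + a) / (n:ℝ) = θp := by rw [hθpdef, hNdef]
    rw [hNn] at hsinm; rw [hNn'] at hsinp
    rw [hNn, hNn']
    have key : |Real.log (Real.sin θp) - Real.log (Real.sin θm)| ≤ ε := by
      have A1 := abs_log_sin_sub_log_le hθppos (le_trans hpu hθ1)
      have A2 := abs_log_sin_sub_log_le hθmpos (le_trans hmu hθ1)
      have hsq1 : θp^2/3 ≤ ε/4 := by nlinarith
      have hsq2 : θm^2/3 ≤ ε/4 := by nlinarith
      have hmid : |Real.log θp - Real.log θm| ≤ ε/2 := by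
        have l1 : Real.log θp ≤ Real.log θu := Real.log_le_log hθppos hpu
        have l2 : Real.log θm ≤ Real.log θu := Real.log_le_log hθmpos hmu
        have l3 : Real.log θl ≤ Real.log θp := Real.log_le_log hθlpos hlp
        have l4 : Real.log θl ≤ Real.log θm := Real.log_le_log hθlpos hlm
        have hul : Real.log θu - Real.log θl ≤ ε/2 := by
          rw [← Real.log_div hθupos.ne' hθlpos.ne']
          have hdiv : θu / θl = (p/2 + k)/(p/2 - k) := by
            rw [hθudef, hθldef]
            field_simp
          rw [hdiv]
          have hlog := Real.log_le_sub_one_of_pos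
            (div_pos (by linarith : (0:ℝ) < p/2 + k) (by linarith : (0:ℝ) < p/2 - k))
          have h2k : (p/2 + k)/(p/2 - k) - 1 = 2*k/(p/2 - k) := by
            rw [div_sub_one (ne_of_gt (by linarith : (0:ℝ) < p/2 - k)), show p/2 + k - (p/2 - k) = 2*k by ring]
          have hle : 2*k/(p/2 - k) ≤ 2*k/(4*k/ε) :=
            div_le_div_of_nonneg_left (by linarith) (by positivity) hp4
          have heq : 2*k/(4*k/ε) = ε/2 := by
            field_simp
            ring
          linarith
        rw [abs_le]; constructor <;> linarith
      have habs1 : |Real.log (Real.sin θp) - Real.log θp| ≤ ε/4 := le_trans A1 hsq1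
      have habs2 : |Real.log (Real.sin θm) - Real.log θm| ≤ ε/4 := le_trans A2 hsq2
      rw [abs_le] at habs1 habs2 hmid ⊢
      constructor <;> linarith [habs1.1, habs1.2, habs2.1, habs2.2, hmid.1, hmid.2]
    calc |-(Real.log 2 + Real.log (Real.sin θm)) - -(Real.log 2 + Real.log (Real.sin θp))|
        = |Real.log (Real.sin θp) - Real.log (Real.sin θm)| := by ring_nf
      _ ≤ ε := key
  -- Mean value theorem
  have hMVT := (convex_Icc (-k) k).norm_image_sub_le_of_norm_hasDerivWithin_le
      (f' := fun a => gper n (p/2 - a) - gper n (p/2 + a))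
      (fun a ha => (hTderiv a ha).hasDerivWithinAt)
      (fun a ha => by simpa [Real.norm_eq_abs] using hbound a ha) hγ hη
  have hrepr : ∀ c ∈ Set.Icc (-k) k,
      (∫ s in (-(N/2))..(-(p/2)), gper n (s - c)) + (∫ s in (p/2)..(N/2), gper n (s - c)) = T c := by
    intro c hc
    obtain ⟨m1, m2, m3, m4⟩ := hmem c hc
    have hpos : (∫ s in (p/2)..(N/2), gper n (s - c)) = F (N/2 - c) - F (p/2 - c) := by
      simp only [hFdef]
      rw [intervalIntegral.integral_comp_sub_right (gper n) c]
      exact (intervalIntegral.integral_interval_sub_left (hII _ _ hmemp m3) (hII _ _ hmemp m1)).symm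
    have hneg : (∫ s in (-(N/2))..(-(p/2)), gper n (s - c)) = F (N/2 + c) - F (p/2 + c) := by
      simp only [hFdef]
      rw [intervalIntegral.integral_comp_sub_right (gper n) c]
      have e1 : -(N/2) - c = -(N/2 + c) := by ring
      have e2 : -(p/2) - c = -(p/2 + c) := by ring
      rw [e1, e2, ← intervalIntegral.integral_comp_neg (gper n)]
      simp only [gper_neg]
      exact (intervalIntegral.integral_interval_sub_left (hII _ _ hmemp m4) (hII _ _ hmemp m2)).symm
    rw [hpos, hneg, hTdef]; ring
  rw [hrepr η hη, hrepr γ hγ]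
  simpa [Real.norm_eq_abs] using hMVT

set_option maxHeartbeats 1000000 in
/-- **Electrostatic potential of a point move, part (b) of Lemma 2.26**. -/
theorem move_potential_b
    (k : ℝ) (hk : 0 < k) (ε : ℝ) (hε : 0 < ε) :
    ∃ p₀ : ℝ, ∀ p : ℝ, p₀ ≤ p → ∃ n₀ : ℕ, ∀ n : ℕ, n₀ ≤ n →
      ∀ M : ℕ, 1 ≤ M → ∀ γ η : Fin M → ℝ,
        (∀ i, γ i ∈ Set.Icc (-k) k) → (∀ i, η i ∈ Set.Icc (-k) k) →
        |∫ s in Lam n \ Lam p, Psin n γ η s| ≤ ε * (W1 γ η + M) := by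
  refine ⟨2*k + 8*k/ε, fun p hp => ?_⟩
  have hppos : 0 < p := lt_of_lt_of_le (by positivity) hp
  set m : ℝ := min 1 (Real.sqrt (3*ε/4)) with hm
  have hmpos : 0 < m := lt_min one_pos (Real.sqrt_pos.mpr (by positivity))
  refine ⟨⌈max p (Real.pi * (p/2 + k) / m)⌉₊ + 1, fun n hn M hM γ η hγ hη => ?_⟩
  set N : ℝ := (n:ℝ) with hNdef
  have hceil : ((⌈max p (Real.pi * (p/2 + k) / m)⌉₊ + 1 : ℕ) : ℝ) ≤ N := by
    rw [hNdef]; exact_mod_cast hn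
  have hmaxle : max p (Real.pi * (p/2+k)/m) ≤ N := by
    refine le_trans (Nat.le_ceil _) (le_trans ?_ hceil)
    push_cast; linarith
  have hpN : p ≤ N := le_trans (le_max_left _ _) hmaxle
  have hθm : Real.pi * (p/2+k)/m ≤ N := le_trans (le_max_right _ _) hmaxle
  have hNpos : 0 < N := lt_of_lt_of_le hppos hpN
  have hθN : Real.pi * (p/2+k)/N ≤ m := by
    rw [div_le_iff₀ hNpos]
    calc Real.pi * (p/2+k) ≤ N * m := (div_le_iff₀ hmpos).mp hθm
      _ = m * N := mul_comm _ _
  have hθ1 : Real.pi * (p/2+k)/N ≤ 1 := le_trans hθN (min_le_left _ _)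
  have hθ2 : (Real.pi * (p/2+k)/N)^2 ≤ 3*ε/4 := by
    have h' : Real.pi*(p/2+k)/N ≤ Real.sqrt (3*ε/4) := le_trans hθN (min_le_right _ _)
    have hnn : (0:ℝ) ≤ Real.pi*(p/2+k)/N := by positivity
    calc (Real.pi*(p/2+k)/N)^2 ≤ (Real.sqrt (3*ε/4))^2 := by nlinarith
      _ = 3*ε/4 := Real.sq_sqrt (by positivity)
  have hp4 : 4*k/ε ≤ p/2 - k := by
    have h84 : 8*k/ε = 2*(4*k/ε) := by ring
    linarith
  have hkp : k < p/2 := by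
    have : (0:ℝ) < 4*k/ε := by positivity
    linarith
  have hkN : k < N/2 := lt_of_lt_of_le hkp (by linarith)
  -- set decomposition
  have hD : Lam N \ Lam p = Set.Ico (-(N/2)) (-(p/2)) ∪ Set.Ioc (p/2) (N/2) := by
    ext s
    simp only [Lam, Set.mem_diff, Set.mem_Icc, Set.mem_union, Set.mem_Ico, Set.mem_Ioc,
      not_and, not_le]
    constructor
    · rintro ⟨⟨h1, h2⟩, h3⟩
      rcases lt_or_ge s (-(p/2)) with h | h
      · exact Or.inl ⟨h1, h⟩
      · exact Or.inr ⟨h3 h, h2⟩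
    · rintro (⟨h1, h2⟩ | ⟨h1, h2⟩)
      · exact ⟨⟨h1, by linarith⟩, fun h => absurd h (not_le.mpr h2)⟩
      · exact ⟨⟨by linarith, h2⟩, fun _ => h1⟩
  -- goodness of the two intervals
  have hgoodpos : ∀ s ∈ Set.Icc (p/2) (N/2), ∀ c ∈ Set.Icc (-k) k,
      0 < |s - c| ∧ |s - c| < N := by
    intro s hs c hc
    obtain ⟨hs1, hs2⟩ := hs; obtain ⟨hc1, hc2⟩ := hc
    have hpos : 0 < s - c := by linarith
    rw [abs_of_pos hpos]
    exact ⟨hpos, by linarith⟩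
  have hgoodneg : ∀ s ∈ Set.Icc (-(N/2)) (-(p/2)), ∀ c ∈ Set.Icc (-k) k,
      0 < |s - c| ∧ |s - c| < N := by
    intro s hs c hc
    obtain ⟨hs1, hs2⟩ := hs; obtain ⟨hc1, hc2⟩ := hc
    have hneg : s - c < 0 := by linarith
    rw [abs_of_neg hneg]
    constructor <;> linarith
  -- continuity of terms
  have hterm : ∀ (lo hi : ℝ), (∀ s ∈ Set.Icc lo hi, ∀ c ∈ Set.Icc (-k) k,
        0 < |s - c| ∧ |s - c| < N) →
      ∀ c ∈ Set.Icc (-k) k, ContinuousOn (fun s => gper n (s - c)) (Set.Icc lo hi) := by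
    intro lo hi hgood c hc s hs
    have h := hgood s hs c hc
    rw [hNdef] at h
    exact (ContinuousAt.comp (f := fun y : ℝ => y - c) (continuousAt_gper (sin_pi_ne h.1 h.2))
      ((continuous_id.sub continuous_const).continuousAt)).continuousWithinAt
  have hPsinCont : ∀ (lo hi : ℝ), (∀ s ∈ Set.Icc lo hi, ∀ c ∈ Set.Icc (-k) k,
        0 < |s - c| ∧ |s - c| < N) →
      ContinuousOn (Psin n γ η) (Set.Icc lo hi) := by
    intro lo hi hgood
    apply continuousOn_finset_sum
    intro i _
    exact (hterm lo hi hgood (η i) (hη i)).sub (hterm lo hi hgood (γ i) (hγ i))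
  have hint1 : IntegrableOn (Psin n γ η) (Set.Ico (-(N/2)) (-(p/2))) :=
    (((hPsinCont _ _ hgoodneg).integrableOn_compact isCompact_Icc).mono_set
      Set.Ico_subset_Icc_self)
  have hint2 : IntegrableOn (Psin n γ η) (Set.Ioc (p/2) (N/2)) :=
    (((hPsinCont _ _ hgoodpos).integrableOn_compact isCompact_Icc).mono_set
      Set.Ioc_subset_Icc_self)
  have hdisj : Disjoint (Set.Ico (-(N/2)) (-(p/2))) (Set.Ioc (p/2) (N/2)) := by
    apply Set.disjoint_left.mpr
    intro x hx hx'
    have := hx.2; have := hx'.1; linarith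
  have hle1 : -(N/2) ≤ -(p/2) := by linarith
  have hle2 : p/2 ≤ N/2 := by linarith
  rw [hD, MeasureTheory.setIntegral_union hdisj measurableSet_Ioc hint1 hint2,
    MeasureTheory.integral_Ico_eq_integral_Ioo, ← MeasureTheory.integral_Ioc_eq_integral_Ioo,
    ← intervalIntegral.integral_of_le hle1,
    ← intervalIntegral.integral_of_le hle2]
  -- swap sum and integral
  have hIIterm : ∀ (lo hi : ℝ), (∀ s ∈ Set.Icc lo hi, ∀ c ∈ Set.Icc (-k) k,
        0 < |s - c| ∧ |s - c| < N) → lo ≤ hi →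
      ∀ c ∈ Set.Icc (-k) k, IntervalIntegrable (fun s => gper n (s - c)) volume lo hi := by
    intro lo hi hgood hle c hc
    apply ContinuousOn.intervalIntegrable
    rw [Set.uIcc_of_le hle]
    exact hterm lo hi hgood c hc
  have hswap : ∀ (lo hi : ℝ), (∀ s ∈ Set.Icc lo hi, ∀ c ∈ Set.Icc (-k) k,
        0 < |s - c| ∧ |s - c| < N) → lo ≤ hi →
      (∫ s in lo..hi, Psin n γ η s)
        = ∑ i, ((∫ s in lo..hi, gper n (s - η i)) - ∫ s in lo..hi, gper n (s - γ i)) := by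
    intro lo hi hgood hle
    simp only [Psin]
    rw [intervalIntegral.integral_finset_sum]
    · exact Finset.sum_congr rfl fun i _ => intervalIntegral.integral_sub
        (hIIterm lo hi hgood hle (η i) (hη i)) (hIIterm lo hi hgood hle (γ i) (hγ i))
    · exact fun i _ => (hIIterm lo hi hgood hle (η i) (hη i)).sub
        (hIIterm lo hi hgood hle (γ i) (hγ i))
  rw [hswap _ _ hgoodneg hle1, hswap _ _ hgoodpos hle2, ← Finset.sum_add_distrib]
  -- now a single sum
  set B : ℝ → ℝ := fun c => (∫ s in (-(N/2))..(-(p/2)), gper n (s - c))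
      + ∫ s in (p/2)..(N/2), gper n (s - c) with hB
  have hsum : ∑ i, ((∫ s in (-(N/2))..(-(p/2)), gper n (s - η i))
        - (∫ s in (-(N/2))..(-(p/2)), gper n (s - γ i))
      + ((∫ s in (p/2)..(N/2), gper n (s - η i)) - ∫ s in (p/2)..(N/2), gper n (s - γ i)))
      = ∑ i, (B (η i) - B (γ i)) := by
    refine Finset.sum_congr rfl fun i _ => ?_
    rw [hB]; ring
  rw [hsum]
  -- minimizing permutation
  obtain ⟨σ, hσ⟩ := exists_eq_ciInf_of_finite
    (f := fun σ : Equiv.Perm (Fin M) => ∑ i, |γ i - η (σ i)|)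
  have hresum : ∑ i, (B (η i) - B (γ i)) = ∑ i, (B (η (σ i)) - B (γ i)) := by
    rw [Finset.sum_sub_distrib, Finset.sum_sub_distrib,
      Equiv.sum_comp σ (fun i => B (η i))]
  rw [hresum]
  have hpair : ∀ i, |B (η (σ i)) - B (γ i)| ≤ ε * |η (σ i) - γ i| := by
    intro i
    exact pair_estimate hk hε hkp hp4 (by rw [← hNdef]; exact hpN)
      (by rw [← hNdef]; exact hθ1) (by rw [← hNdef]; exact hθ2) (hγ i) (hη (σ i))
  calc |∑ i, (B (η (σ i)) - B (γ i))| ≤ ∑ i, |B (η (σ i)) - B (γ i)| :=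
        Finset.abs_sum_le_sum_abs _ _
    _ ≤ ∑ i, ε * |η (σ i) - γ i| := Finset.sum_le_sum fun i _ => hpair i
    _ = ε * ∑ i, |γ i - η (σ i)| := by
        rw [← Finset.mul_sum]; congr 1; exact Finset.sum_congr rfl fun i _ => abs_sub_comm _ _
    _ = ε * W1 γ η := by rw [W1, ← hσ]
    _ ≤ ε * (W1 γ η + M) := by
        have : (0:ℝ) ≤ (M:ℝ) := Nat.cast_nonneg _
        nlinarith

end
end

section
/- Electrostatic potential of a point move, part (c) of Lemma 2.26: let k > 0 and Λ = [−k, k], and let p ≤ n be integers with [−3k, 3k] ⊆ Λ_p ⊆ Λ_n. For every integer M ≥ 1, all points γ_1, …, γ_M, η_1, …, η_M ∈ Λ, and every x ∈ Λ_n ∖ Λ_p, one has |Ψ_n(x)| ≤ W₁ / dist(x, Λ) and |Ψ_n′(x)| ≤ 8 · W₁ / dist(x, Λ)², where dist(x, Λ) = |x| − k > 0 and Ψ_n′ denotes the derivative of Ψ_n. -/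
open MeasureTheory Real Filter Topology
open scoped ENNReal Classical BigOperators

noncomputable section

lemma cot_le_inv {u : ℝ} (h0 : 0 < u) (h2 : u ≤ π / 2) : Real.cos u / Real.sin u ≤ u⁻¹ := by
  have hs : 0 < Real.sin u :=
    Real.sin_pos_of_pos_of_lt_pi h0 (lt_of_le_of_lt h2 (by linarith [Real.pi_pos]))
  rcases h2.lt_or_eq with hlt | heq
  · have hc : 0 < Real.cos u := Real.cos_pos_of_mem_Ioo ⟨by linarith [Real.pi_pos], hlt⟩
    have ht := Real.lt_tan h0 hlt
    rw [Real.tan_eq_sin_div_cos, lt_div_iff₀ hc] at ht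
    rw [div_le_iff₀ hs, inv_mul_eq_div, le_div_iff₀ h0]
    nlinarith
  · rw [heq, Real.cos_pi_div_two]
    simp
    positivity

lemma abs_cot_le {u : ℝ} (h0 : 0 < u) (hπ : u < π) :
    |Real.cos u / Real.sin u| ≤ (min u (π - u))⁻¹ := by
  have hs : 0 < Real.sin u := Real.sin_pos_of_pos_of_lt_pi h0 hπ
  rcases le_or_gt u (π / 2) with h2 | h2
  · have hc : 0 ≤ Real.cos u := Real.cos_nonneg_of_mem_Icc ⟨by linarith [Real.pi_pos], h2⟩
    rw [abs_of_nonneg (div_nonneg hc hs.le)]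
    refine (cot_le_inv h0 h2).trans ?_
    exact inv_anti₀ (lt_min h0 (by linarith)) (min_le_left _ _)
  · have hv0 : 0 < π - u := by linarith
    have hkey : Real.cos (π - u) / Real.sin (π - u) ≤ (π - u)⁻¹ :=
      cot_le_inv hv0 (by linarith)
    rw [Real.cos_pi_sub, Real.sin_pi_sub] at hkey
    have hcneg : Real.cos u ≤ 0 :=
      Real.cos_nonpos_of_pi_div_two_le_of_le h2.le (by linarith [Real.pi_pos])
    rw [abs_of_nonpos (div_nonpos_of_nonpos_of_nonneg hcneg hs.le)]
    have : -(Real.cos u / Real.sin u) = -Real.cos u / Real.sin u := by ring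
    rw [this]
    exact hkey.trans (inv_anti₀ (lt_min h0 hv0) (min_le_right _ _))

lemma sin_ne_aux {n : ℕ} (hn : 0 < (n : ℝ)) {y : ℝ} (h0 : 0 < |y|) (h1 : |y| < n) :
    Real.sin (π / n * y) ≠ 0 := by
  have hpos : 0 < Real.sin (π / n * |y|) := by
    apply Real.sin_pos_of_pos_of_lt_pi
    · have hπ := Real.pi_pos
      positivity
    · have : π / n * |y| < π / n * n := by
        apply mul_lt_mul_of_pos_left h1 (by positivity)
      rwa [div_mul_cancel₀ _ hn.ne'] at this
  rcases abs_cases y with ⟨h, _⟩ | ⟨h, _⟩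
  · rw [h] at hpos; exact hpos.ne'
  · rw [h] at hpos
    intro hc
    rw [show π / n * -y = -(π / n * y) by ring, Real.sin_neg, hc] at hpos
    simp at hpos

lemma cot_scaled_bound {n : ℕ} (hn : 0 < (n : ℝ)) {y d : ℝ} (hd : 0 < d)
    (h1 : d ≤ |y|) (h2 : |y| ≤ n - d) :
    π / n * |Real.cos (π / n * y) / Real.sin (π / n * y)| ≤ d⁻¹ := by
  have habs : |Real.cos (π / n * y) / Real.sin (π / n * y)|
      = |Real.cos (π / n * |y|) / Real.sin (π / n * |y|)| := by
    rcases abs_cases y with ⟨h, _⟩ | ⟨h, _⟩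
    · rw [h]
    · rw [h, show π / n * -y = -(π / n * y) by ring, Real.cos_neg, Real.sin_neg, abs_div,
        abs_div, abs_neg]
  rw [habs]
  set u := π / n * |y| with hu
  have hu0 : 0 < u := by
    have hπ := Real.pi_pos
    have hy : 0 < |y| := by linarith
    positivity
  have huπ : u < π := by
    have : π / n * |y| < π / n * n := mul_lt_mul_of_pos_left (by linarith) (by positivity)
    rwa [div_mul_cancel₀ _ hn.ne'] at this
  have hmin : π - u = π / n * (n - |y|) := by
    rw [hu]; field_simp
  have hc := abs_cot_le hu0 huπ
  have hmineq : min u (π - u) = π / n * min (|y|) (n - |y|) := by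
    rw [hmin, hu]
    rcases le_total (|y|) (n - |y|) with h | h
    · rw [min_eq_left h, min_eq_left (by apply mul_le_mul_of_nonneg_left h (by positivity))]
    · rw [min_eq_right h, min_eq_right (by apply mul_le_mul_of_nonneg_left h (by positivity))]
  have hmpos : 0 < min (|y|) (n - |y|) := lt_min (by linarith) (by linarith)
  calc π / n * |Real.cos u / Real.sin u| ≤ π / n * (min u (π - u))⁻¹ :=
        mul_le_mul_of_nonneg_left hc (by positivity)
    _ = (min (|y|) (n - |y|))⁻¹ := by
        rw [hmineq, mul_inv]
        field_simp
    _ ≤ d⁻¹ := inv_anti₀ hd (le_min h1 (by linarith))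

lemma cot2_bound {n : ℕ} (hn : 0 < (n : ℝ)) {y d : ℝ} (hd : 0 < d)
    (h1 : d ≤ |y|) (h2 : |y| ≤ n - d) :
    (π / n) ^ 2 / Real.sin (π / n * y) ^ 2 ≤ 8 / d ^ 2 := by
  have hπ := Real.pi_pos
  have hb := cot_scaled_bound hn hd h1 h2
  have hsne : Real.sin (π / n * y) ≠ 0 :=
    sin_ne_aux hn (by linarith) (by linarith)
  have hA : (π / n * (Real.cos (π / n * y) / Real.sin (π / n * y))) ^ 2 ≤ (d⁻¹) ^ 2 := by
    rw [← sq_abs]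
    apply pow_le_pow_left₀ (abs_nonneg _) ?_ 2
    rw [abs_mul, abs_of_nonneg (by positivity : (0:ℝ) ≤ π / n)]
    exact hb
  have h2d : 2 * d ≤ (n : ℝ) := by linarith
  have hB : (π / n) ^ 2 ≤ (2 * d⁻¹) ^ 2 := by
    apply pow_le_pow_left₀ (by positivity) ?_ 2
    have hpi4 : π ≤ 4 := Real.pi_le_four
    calc π / n ≤ π / (2 * d) :=
          div_le_div_of_nonneg_left Real.pi_pos.le (by positivity) h2d
      _ ≤ 4 / (2 * d) := by gcongr
      _ = 2 * d⁻¹ := by field_simp; ring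
  have hkey : (π / n) ^ 2 / Real.sin (π / n * y) ^ 2
      = (π / n) ^ 2 + (π / n * (Real.cos (π / n * y) / Real.sin (π / n * y))) ^ 2 := by
    have hpy := Real.sin_sq_add_cos_sq (π / n * y)
    set S := Real.sin (π / n * y) with hS
    set C := Real.cos (π / n * y) with hC
    field_simp
    linear_combination -1 * hpy
  rw [hkey]
  have hfin : (2 * d⁻¹) ^ 2 + (d⁻¹) ^ 2 ≤ 8 / d ^ 2 := by
    have h5 : (2 * d⁻¹) ^ 2 + (d⁻¹) ^ 2 = 5 / d ^ 2 := by
      field_simp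
      ring
    rw [h5]
    gcongr
    norm_num
  linarith [hA, hB, hfin]

lemma gper_hasDeriv (n : ℕ) {y : ℝ} (hy : Real.sin (π / n * y) ≠ 0) :
    HasDerivAt (gper n) (-(π / n * (Real.cos (π / n * y) / Real.sin (π / n * y)))) y := by
  have harg : ∀ z : ℝ, Real.pi * z / (n : ℝ) = π / n * z := fun z => by ring
  have hcont : Continuous fun z : ℝ => Real.sin (π / n * z) :=
    Real.continuous_sin.comp (continuous_const.mul continuous_id)
  have hset : ∀ᶠ z in nhds y, Real.sin (π / n * z) ≠ 0 :=
    hcont.continuousAt.eventually_ne hy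
  have heq : gper n =ᶠ[nhds y] fun z => -Real.log (2 * Real.sin (π / n * z)) := by
    filter_upwards [hset] with z hz
    rw [gper, harg z, if_pos hz, Real.log_abs]
  have h1 : HasDerivAt (fun z : ℝ => π / n * z) (π / n) y := by
    simpa using (hasDerivAt_id y).const_mul (π / n)
  have h2 : HasDerivAt (fun z : ℝ => Real.sin (π / n * z))
      (Real.cos (π / n * y) * (π / n)) y := (Real.hasDerivAt_sin _).comp y h1
  have h3 : HasDerivAt (fun z : ℝ => 2 * Real.sin (π / n * z))
      (2 * (Real.cos (π / n * y) * (π / n))) y := h2.const_mul 2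
  have hne : 2 * Real.sin (π / n * y) ≠ 0 := by
    simpa using hy
  have h4 : HasDerivAt (fun z : ℝ => -Real.log (2 * Real.sin (π / n * z)))
      (-((2 * Real.sin (π / n * y))⁻¹ * (2 * (Real.cos (π / n * y) * (π / n))))) y := by
    have h5 := (h3.log hne).neg
    rw [div_eq_inv_mul (2 * (Real.cos (π / n * y) * (π / n)))] at h5
    exact h5
  have heqd : -((2 * Real.sin (π / n * y))⁻¹ * (2 * (Real.cos (π / n * y) * (π / n))))
      = -(π / n * (Real.cos (π / n * y) / Real.sin (π / n * y))) := by
    field_simp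
  rw [heqd] at h4
  exact h4.congr_of_eventuallyEq heq

lemma cot_hasDeriv (n : ℕ) {y : ℝ} (hy : Real.sin (π / n * y) ≠ 0) :
    HasDerivAt (fun z => -(π / n * (Real.cos (π / n * z) / Real.sin (π / n * z))))
      ((π / n) ^ 2 / Real.sin (π / n * y) ^ 2) y := by
  have h1 : HasDerivAt (fun z : ℝ => π / n * z) (π / n) y := by
    simpa using (hasDerivAt_id y).const_mul (π / n)
  have hs : HasDerivAt (fun z : ℝ => Real.sin (π / n * z))
      (Real.cos (π / n * y) * (π / n)) y := (Real.hasDerivAt_sin _).comp y h1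
  have hc : HasDerivAt (fun z : ℝ => Real.cos (π / n * z))
      (-Real.sin (π / n * y) * (π / n)) y := (Real.hasDerivAt_cos _).comp y h1
  have hd := ((hc.div hs hy).const_mul (π / n)).neg
  have hpy := Real.sin_sq_add_cos_sq (π / n * y)
  have hnum : -Real.sin (π / n * y) * (π / n) * Real.sin (π / n * y) -
      Real.cos (π / n * y) * (Real.cos (π / n * y) * (π / n)) = -(π / n) := by
    linear_combination (-(π / (n : ℝ))) * hpy
  rw [hnum] at hd
  have : -(π / n * (-(π / n) / Real.sin (π / n * y) ^ 2))
      = (π / n) ^ 2 / Real.sin (π / n * y) ^ 2 := by ring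
  rwa [this] at hd

lemma mvt_pair {f f' : ℝ → ℝ} {s : Set ℝ} (hconv : Convex ℝ s)
    (hderiv : ∀ y ∈ s, HasDerivAt f (f' y) y) {C : ℝ} (hC : ∀ y ∈ s, |f' y| ≤ C)
    {a b : ℝ} (ha : a ∈ s) (hb : b ∈ s) : |f b - f a| ≤ C * |b - a| := by
  have := hconv.norm_image_sub_le_of_norm_hasDerivWithin_le
    (fun y hy => (hderiv y hy).hasDerivWithinAt)
    (fun y hy => by simpa [Real.norm_eq_abs] using hC y hy) ha hb
  simpa [Real.norm_eq_abs] using this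

/-- **Electrostatic potential of a point move, part (c) of Lemma 2.26**. -/
theorem move_potential_c
    (k : ℝ) (hk : 0 < k) (p n : ℕ) (hpn : p ≤ n)
    (hp : Set.Icc (-(3 * k)) (3 * k) ⊆ Lam p)
    (M : ℕ) (hM : 1 ≤ M) (γ η : Fin M → ℝ)
    (hγ : ∀ i, γ i ∈ Set.Icc (-k) k) (hη : ∀ i, η i ∈ Set.Icc (-k) k)
    (x : ℝ) (hx : x ∈ Lam n \ Lam p) :
    |Psin n γ η x| ≤ W1 γ η / (|x| - k) ∧
      |deriv (Psin n γ η) x| ≤ 8 * W1 γ η / (|x| - k) ^ 2 := by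
  classical
  obtain ⟨hxn, hxp⟩ := hx
  simp only [Lam, Set.mem_Icc] at hxn hxp
  push_neg at hxp
  have hπ := Real.pi_pos
  have h3k : 3 * k ≤ (p : ℝ) / 2 := by
    have := hp (Set.mem_Icc.mpr ⟨by linarith, le_refl (3 * k)⟩)
    rw [Lam, Set.mem_Icc] at this
    exact this.2
  have hpn' : (p : ℝ) ≤ n := Nat.cast_le.mpr hpn
  have hpx : (p : ℝ) / 2 < |x| := by
    rcases le_or_gt (-((p : ℝ) / 2)) x with h | h
    · have := hxp h
      rcases abs_cases x with ⟨he, hs⟩ | ⟨he, hs⟩ <;> linarith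
    · rcases abs_cases x with ⟨he, hs⟩ | ⟨he, hs⟩ <;> linarith
  have hxn2 : |x| ≤ (n : ℝ) / 2 := abs_le.mpr ⟨hxn.1, hxn.2⟩
  have hn0 : 0 < (n : ℝ) := by linarith
  set d := |x| - k with hdd
  have hd : 0 < d := by simp only [hdd]; linarith
  set s : Set ℝ := Set.Icc (x - k) (x + k) with hss
  have hdom : ∀ y ∈ s, d ≤ |y| ∧ |y| ≤ (n : ℝ) - d := by
    intro y hy
    rw [hss, Set.mem_Icc] at hy
    obtain ⟨hy1, hy2⟩ := hy
    constructor
    · rcases abs_cases x with ⟨he, hs⟩ | ⟨he, hs⟩ <;>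
        rcases abs_cases y with ⟨he2, hs2⟩ | ⟨he2, hs2⟩ <;>
        simp only [hdd] <;> linarith
    · rcases abs_cases x with ⟨he, hs⟩ | ⟨he, hs⟩ <;>
        rcases abs_cases y with ⟨he2, hs2⟩ | ⟨he2, hs2⟩ <;>
        simp only [hdd] <;> linarith
  have hsne : ∀ y ∈ s, Real.sin (π / n * y) ≠ 0 := fun y hy =>
    sin_ne_aux hn0 (lt_of_lt_of_le hd (hdom y hy).1)
      (lt_of_le_of_lt (hdom y hy).2 (by linarith))
  have hmem : ∀ t : ℝ, t ∈ Set.Icc (-k) k → x - t ∈ s := by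
    intro t ht
    rw [Set.mem_Icc] at ht
    rw [hss, Set.mem_Icc]
    constructor <;> linarith [ht.1, ht.2]
  set g' : ℝ → ℝ := fun y => -(π / n * (Real.cos (π / n * y) / Real.sin (π / n * y))) with hg'
  have hgd : ∀ y ∈ s, HasDerivAt (gper n) (g' y) y := fun y hy =>
    gper_hasDeriv n (hsne y hy)
  have hgb : ∀ y ∈ s, |g' y| ≤ d⁻¹ := by
    intro y hy
    rw [hg']
    simp only [abs_neg, abs_mul]
    rw [abs_of_nonneg (by positivity : (0 : ℝ) ≤ π / n)]
    exact cot_scaled_bound hn0 hd (hdom y hy).1 (hdom y hy).2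
  have hg2d : ∀ y ∈ s, HasDerivAt g' ((π / n) ^ 2 / Real.sin (π / n * y) ^ 2) y := fun y hy =>
    cot_hasDeriv n (hsne y hy)
  have hg2b : ∀ y ∈ s, |(π / n) ^ 2 / Real.sin (π / n * y) ^ 2| ≤ 8 / d ^ 2 := by
    intro y hy
    rw [abs_of_nonneg (by positivity)]
    exact cot2_bound hn0 hd (hdom y hy).1 (hdom y hy).2
  -- per-permutation bounds
  have key : ∀ σ : Equiv.Perm (Fin M),
      |Psin n γ η x| ≤ d⁻¹ * ∑ i, |γ i - η (σ i)| ∧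
      |∑ i, (g' (x - η i) - g' (x - γ i))| ≤ (8 / d ^ 2) * ∑ i, |γ i - η (σ i)| := by
    intro σ
    have hre : ∀ F : ℝ → ℝ, ∑ i, (F (x - η i) - F (x - γ i))
        = ∑ i, (F (x - η (σ i)) - F (x - γ i)) := by
      intro F
      rw [Finset.sum_sub_distrib, Finset.sum_sub_distrib,
        ← Equiv.sum_comp σ (fun i => F (x - η i))]
    have hterm : ∀ (F F' : ℝ → ℝ) (C : ℝ), (∀ y ∈ s, HasDerivAt F (F' y) y) →
        (∀ y ∈ s, |F' y| ≤ C) → ∀ i : Fin M,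
        |F (x - η (σ i)) - F (x - γ i)| ≤ C * |γ i - η (σ i)| := by
      intro F F' C hFd hFb i
      have := mvt_pair (convex_Icc _ _) hFd hFb
        (hmem (γ i) (hγ i)) (hmem (η (σ i)) (hη (σ i)))
      have harg : (x - η (σ i)) - (x - γ i) = γ i - η (σ i) := by ring
      rwa [harg] at this
    constructor
    · rw [Psin, hre (gper n)]
      calc |∑ i, (gper n (x - η (σ i)) - gper n (x - γ i))|
          ≤ ∑ i, |gper n (x - η (σ i)) - gper n (x - γ i)| :=
            Finset.abs_sum_le_sum_abs _ _
        _ ≤ ∑ i, d⁻¹ * |γ i - η (σ i)| :=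
            Finset.sum_le_sum fun i _ => hterm (gper n) g' d⁻¹ hgd hgb i
        _ = d⁻¹ * ∑ i, |γ i - η (σ i)| := by rw [Finset.mul_sum]
    · rw [hre g']
      calc |∑ i, (g' (x - η (σ i)) - g' (x - γ i))|
          ≤ ∑ i, |g' (x - η (σ i)) - g' (x - γ i)| :=
            Finset.abs_sum_le_sum_abs _ _
        _ ≤ ∑ i, (8 / d ^ 2) * |γ i - η (σ i)| :=
            Finset.sum_le_sum fun i _ =>
              hterm g' (fun y => (π / n) ^ 2 / Real.sin (π / n * y) ^ 2) (8 / d ^ 2)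
                hg2d hg2b i
        _ = (8 / d ^ 2) * ∑ i, |γ i - η (σ i)| := by rw [Finset.mul_sum]
  -- derivative of Psin at x
  have hPd : HasDerivAt (Psin n γ η) (∑ i, (g' (x - η i) - g' (x - γ i))) x := by
    have hterm : ∀ i : Fin M, HasDerivAt (fun z => gper n (z - η i) - gper n (z - γ i))
        (g' (x - η i) - g' (x - γ i)) x := by
      intro i
      have h1 : HasDerivAt (fun z : ℝ => gper n (z - η i)) (g' (x - η i)) x := by
        have := HasDerivAt.comp x (hgd _ (hmem (η i) (hη i)))
          ((hasDerivAt_id x).sub_const (η i))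
        exact (hgd _ (hmem (η i) (hη i))).comp_sub_const x (η i)
      have h2 : HasDerivAt (fun z : ℝ => gper n (z - γ i)) (g' (x - γ i)) x := by
        have := HasDerivAt.comp x (hgd _ (hmem (γ i) (hγ i)))
          ((hasDerivAt_id x).sub_const (γ i))
        exact (hgd _ (hmem (γ i) (hγ i))).comp_sub_const x (γ i)
      exact h1.sub h2
    have := HasDerivAt.fun_sum (fun i (_ : i ∈ Finset.univ) => hterm i)
    exact this
  -- the minimizing permutation
  obtain ⟨σ₀, hσ₀⟩ := Finite.exists_min
    (fun σ : Equiv.Perm (Fin M) => ∑ i, |γ i - η (σ i)|)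
  have hW : W1 γ η = ∑ i, |γ i - η (σ₀ i)| := by
    refine le_antisymm (ciInf_le (Finite.bddBelow_range _) σ₀) (le_ciInf hσ₀)
  obtain ⟨k1, k2⟩ := key σ₀
  constructor
  · calc |Psin n γ η x| ≤ d⁻¹ * ∑ i, |γ i - η (σ₀ i)| := k1
      _ = W1 γ η / d := by rw [hW, inv_mul_eq_div]
  · rw [hPd.deriv]
    calc |∑ i, (g' (x - η i) - g' (x - γ i))|
        ≤ (8 / d ^ 2) * ∑ i, |γ i - η (σ₀ i)| := k2
      _ = 8 * W1 γ η / d ^ 2 := by rw [hW]; ring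

end
end

section
/- Electrostatic potential of a point move, part (d) of Lemma 2.26: let k > 0 and Λ = [−k, k], and let p be such that [−3k, 3k] ⊆ Λ_p. For every integer M ≥ 1, all points γ_1, …, γ_M, η_1, …, η_M ∈ Λ, and every x ∈ ℝ ∖ Λ_p, one has |Ψ(x)| ≤ W₁ / dist(x, Λ) and |Ψ′(x)| ≤ 8 · W₁ / dist(x, Λ)², where dist(x, Λ) = |x| − k > 0 and Ψ′ denotes the derivative of Ψ. -/
open MeasureTheory Real Filter Topology
open scoped ENNReal Classical BigOperators

noncomputable section

lemma log_diff_le (d a b : ℝ) (hd : 0 < d) (ha : d ≤ a) (hb : d ≤ b) :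
    |Real.log a - Real.log b| ≤ |a - b| / d := by
  wlog hab : b ≤ a generalizing a b
  · rw [abs_sub_comm, abs_sub_comm a b]; exact this b a hb ha (not_le.mp hab).le
  have ha0 : 0 < a := hd.trans_le ha
  have hb0 : 0 < b := hd.trans_le hb
  rw [abs_of_nonneg (sub_nonneg.2 (Real.log_le_log hb0 hab)),
      abs_of_nonneg (sub_nonneg.2 hab), ← Real.log_div ha0.ne' hb0.ne']
  have h1 : Real.log (a / b) ≤ a / b - 1 := Real.log_le_sub_one_of_pos (div_pos ha0 hb0)
  have h2 : a / b - 1 = (a - b) / b := by field_simp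
  calc Real.log (a / b) ≤ (a - b) / b := by rw [← h2]; exact h1
    _ ≤ (a - b) / d := by gcongr

lemma inv_diff_le (d x u v : ℝ) (hd : 0 < d) (hu : d ≤ |x - u|) (hv : d ≤ |x - v|) :
    |(x - u)⁻¹ - (x - v)⁻¹| ≤ |u - v| / d ^ 2 := by
  have hu0 : x - u ≠ 0 := by intro h; rw [h] at hu; simp at hu; linarith
  have hv0 : x - v ≠ 0 := by intro h; rw [h] at hv; simp at hv; linarith
  rw [inv_sub_inv hu0 hv0]
  have : (x - v) - (x - u) = u - v := by ring
  rw [this, abs_div, abs_mul]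
  calc |u - v| / (|x - u| * |x - v|) ≤ |u - v| / (d * d) :=
        div_le_div_of_nonneg_left (abs_nonneg _) (by positivity)
          (mul_le_mul hu hv hd.le (abs_nonneg _))
    _ = |u - v| / d ^ 2 := by ring_nf

/-- **Electrostatic potential of a point move, part (d) of Lemma 2.26**. -/
theorem move_potential_d
    (k : ℝ) (hk : 0 < k) (p : ℝ)
    (hp : Set.Icc (-(3 * k)) (3 * k) ⊆ Lam p)
    (M : ℕ) (hM : 1 ≤ M) (γ η : Fin M → ℝ)
    (hγ : ∀ i, γ i ∈ Set.Icc (-k) k) (hη : ∀ i, η i ∈ Set.Icc (-k) k)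
    (x : ℝ) (hx : x ∈ Set.univ \ Lam p) :
    |Psi γ η x| ≤ W1 γ η / (|x| - k) ∧
      |deriv (Psi γ η) x| ≤ 8 * W1 γ η / (|x| - k) ^ 2 := by
  -- basic geometry
  have h3k : (3 : ℝ) * k ≤ p / 2 := (hp ⟨by linarith, le_refl _⟩).2
  have hxabs : 3 * k < |x| := by
    have hxn : x ∉ Lam p := hx.2
    simp only [Lam, Set.mem_Icc, not_and_or, not_le] at hxn
    rcases hxn with h | h
    · have : p / 2 < -x := by linarith
      calc 3 * k ≤ p / 2 := h3k
        _ < -x := this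
        _ ≤ |x| := neg_le_abs x
    · calc 3 * k ≤ p / 2 := h3k
        _ < x := h
        _ ≤ |x| := le_abs_self x
  set d := |x| - k with hdd
  have hd0 : 0 < d := by simp only [hdd]; linarith
  have hdist : ∀ c : ℝ, c ∈ Set.Icc (-k) k → d ≤ |x - c| := by
    intro c hc
    have h1 : |c| ≤ k := abs_le.mpr ⟨hc.1, hc.2⟩
    have h2 : |x| - |c| ≤ |x - c| := abs_sub_abs_le_abs_sub x c
    simp only [hdd]; linarith
  -- minimizer
  obtain ⟨σ, hσ⟩ := Finite.exists_min (fun σ : Equiv.Perm (Fin M) => ∑ i, |γ i - η (σ i)|)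
  have hW1 : W1 γ η = ∑ i, |γ i - η (σ i)| :=
    le_antisymm (ciInf_le (Set.finite_range _).bddBelow σ) (le_ciInf hσ)
  have hW1nn : 0 ≤ W1 γ η := by
    rw [hW1]; exact Finset.sum_nonneg fun i _ => abs_nonneg _
  constructor
  · -- potential bound
    have hPsi : Psi γ η x = ∑ i, (Real.log |x - γ i| - Real.log |x - η (σ i)|) := by
      unfold Psi
      rw [Finset.sum_sub_distrib, Finset.sum_sub_distrib]
      congr 1
      exact (Equiv.sum_comp σ fun i => Real.log |x - η i|).symm
    rw [hPsi, hW1]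
    refine (Finset.abs_sum_le_sum_abs
      (fun i => Real.log |x - γ i| - Real.log |x - η (σ i)|) Finset.univ).trans ?_
    rw [Finset.sum_div]
    refine Finset.sum_le_sum fun i _ => ?_
    have h1 := log_diff_le d |x - γ i| |x - η (σ i)| hd0
      (hdist _ (hγ i)) (hdist _ (hη (σ i)))
    refine h1.trans ?_
    refine div_le_div_of_nonneg_right ?_ hd0.le
    refine (abs_abs_sub_abs_le_abs_sub (x - γ i) (x - η (σ i))).trans ?_
    rw [show (x - γ i) - (x - η (σ i)) = -(γ i - η (σ i)) by ring, abs_neg]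
  · -- derivative bound
    have hne : ∀ c : ℝ, c ∈ Set.Icc (-k) k → x - c ≠ 0 := by
      intro c hc h
      have := hdist c hc
      rw [h] at this; simp at this; linarith
    have heq : Psi γ η = fun s => ∑ i, (Real.log (s - γ i) - Real.log (s - η i)) := by
      funext s; simp [Psi, Real.log_abs]
    have hderiv : HasDerivAt (Psi γ η) (∑ i, ((x - γ i)⁻¹ - (x - η i)⁻¹)) x := by
      rw [heq]
      refine HasDerivAt.fun_sum fun i _ => HasDerivAt.sub ?_ ?_
      · simpa [Function.comp_def] using (Real.hasDerivAt_log (hne _ (hγ i))).comp x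
          ((hasDerivAt_id x).sub_const (γ i))
      · simpa [Function.comp_def] using (Real.hasDerivAt_log (hne _ (hη i))).comp x
          ((hasDerivAt_id x).sub_const (η i))
    rw [hderiv.deriv]
    have hsum : ∑ i, ((x - γ i)⁻¹ - (x - η i)⁻¹)
        = ∑ i, ((x - γ i)⁻¹ - (x - η (σ i))⁻¹) := by
      rw [Finset.sum_sub_distrib, Finset.sum_sub_distrib]
      congr 1
      exact (Equiv.sum_comp σ fun i => (x - η i)⁻¹).symm
    rw [hsum]
    have hbound : |∑ i, ((x - γ i)⁻¹ - (x - η (σ i))⁻¹)| ≤ W1 γ η / d ^ 2 := by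
      rw [hW1]
      refine (Finset.abs_sum_le_sum_abs
        (fun i => (x - γ i)⁻¹ - (x - η (σ i))⁻¹) Finset.univ).trans ?_
      rw [Finset.sum_div]
      exact Finset.sum_le_sum fun i _ =>
        inv_diff_le d x (γ i) (η (σ i)) hd0 (hdist _ (hγ i)) (hdist _ (hη (σ i)))
    refine hbound.trans ?_
    have hd2 : (0:ℝ) < d ^ 2 := by positivity
    rw [div_le_div_iff₀ hd2 hd2]
    nlinarith
end
end

section
/- Existence and positivity of the exterior weight (deterministic content of part (B) of Theorems 1.1 and 2.1): let a > 0 and let γ ⊂ ℝ be a locally finite set with γ ∩ (−a, a) = ∅, and let μ be the counting measure of γ. Assume that (i) D_μ(t)/t → 0 and D̃_μ(t)/t → 0 as t → ∞, and (ii) Σ_{j ≥ 1} |D_μ((j+1)/2)| / j² < ∞ and Σ_{j ≥ 1} |D̃_μ((j+1)/2)| / j² < ∞. Then for every x ∈ (−a, a), the limit lim_{p → ∞} Σ_{u ∈ γ, |u| ≤ p} log|1 − x/u| exists and is a finite real number; consequently, for every β > 0 the limit ω(x) := lim_{p → ∞} ∏_{u ∈ γ, |u| ≤ p} |1 − x/u|^β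 exists and is a strictly positive real number. -/
open Real Filter Topology
open scoped BigOperators

noncomputable def lg (x u : ℝ) : ℝ := Real.log |1 - x / u|

noncomputable def tt (j : ℕ) : ℝ := ((j:ℝ)+2)/2
noncomputable def DD (γ : Set ℝ) (j : ℕ) : ℝ := ((γ ∩ Set.Ioc 0 (tt j)).ncard : ℝ) - tt j
noncomputable def DD' (γ : Set ℝ) (j : ℕ) : ℝ := ((γ ∩ Set.Ico (-(tt j)) 0).ncard : ℝ) - tt j
noncomputable def FF (γ : Set ℝ) (x : ℝ) (p : ℝ) : ℝ :=
  ∑ᶠ u ∈ {u ∈ γ | |u| ≤ p}, lg x u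

lemma tt_pos (j : ℕ) : 0 < tt j := by unfold tt; positivity

lemma tt_one_le (j : ℕ) : 1 ≤ tt j := by
  unfold tt
  have : (0:ℝ) ≤ (j:ℝ) := Nat.cast_nonneg j
  linarith

lemma tt_succ (j : ℕ) : tt (j+1) = tt j + 1/2 := by unfold tt; push_cast; ring

lemma tt_le_succ (j : ℕ) : tt j ≤ tt (j+1) := by rw [tt_succ]; linarith

lemma tt_mono : Monotone tt := by
  intro j k h
  unfold tt
  have : (j:ℝ) ≤ (k:ℝ) := Nat.cast_le.mpr h
  linarith

lemma tt_succ_le_two (j : ℕ) : tt (j+1) ≤ 2 * tt j := by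
  rw [tt_succ]
  have := tt_one_le j
  linarith

lemma abs_finsum_le {S : Set ℝ} (hS : S.Finite) (f : ℝ → ℝ) {C : ℝ}
    (h : ∀ u ∈ S, |f u| ≤ C) : |∑ᶠ u ∈ S, f u| ≤ (S.ncard : ℝ) * C := by
  rw [finsum_mem_eq_finite_toFinset_sum _ hS]
  calc |∑ u ∈ hS.toFinset, f u| ≤ ∑ u ∈ hS.toFinset, |f u| := Finset.abs_sum_le_sum_abs _ _
  _ ≤ hS.toFinset.card • C := Finset.sum_le_card_nsmul _ _ _ (by simpa using h)
  _ = (S.ncard : ℝ) * C := by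
      rw [Set.ncard_eq_toFinset_card _ hS, nsmul_eq_mul]

lemma finsum_shift {S : Set ℝ} (hS : S.Finite) (f : ℝ → ℝ) (c : ℝ) :
    ∑ᶠ u ∈ S, f u = (∑ᶠ u ∈ S, (f u + c)) - (S.ncard : ℝ) * c := by
  rw [finsum_mem_eq_finite_toFinset_sum _ hS, finsum_mem_eq_finite_toFinset_sum _ hS,
    Finset.sum_add_distrib, Finset.sum_const, Set.ncard_eq_toFinset_card _ hS, nsmul_eq_mul]
  ring

lemma FF_split (γ : Set ℝ) (x q r : ℝ) (hq : 0 < q) (hqr : q ≤ r)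
    (h1 : {u ∈ γ | |u| ≤ q}.Finite) (h2 : (γ ∩ Set.Ioc q r).Finite)
    (h3 : (γ ∩ Set.Ico (-r) (-q)).Finite) :
    FF γ x r = FF γ x q + ((∑ᶠ u ∈ γ ∩ Set.Ioc q r, lg x u)
      + ∑ᶠ u ∈ γ ∩ Set.Ico (-r) (-q), lg x u) := by
  have hset : {u ∈ γ | |u| ≤ r}
      = {u ∈ γ | |u| ≤ q} ∪ ((γ ∩ Set.Ioc q r) ∪ (γ ∩ Set.Ico (-r) (-q))) := by
    ext u
    simp only [Set.mem_setOf_eq, Set.mem_union, Set.mem_inter_iff, Set.mem_Ioc, Set.mem_Ico]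
    constructor
    · rintro ⟨hu, hur⟩
      rcases le_or_gt |u| q with h | h
      · exact Or.inl ⟨hu, h⟩
      · rcases le_or_gt 0 u with h0 | h0
        · refine Or.inr (Or.inl ⟨hu, ?_, ?_⟩)
          · rwa [abs_of_nonneg h0] at h
          · rwa [abs_of_nonneg h0] at hur
        · refine Or.inr (Or.inr ⟨hu, ?_, ?_⟩)
          · rw [abs_of_neg h0] at hur; linarith
          · rw [abs_of_neg h0] at h; linarith
    · rintro (⟨hu, h⟩ | ⟨hu, ha', hb'⟩ | ⟨hu, ha', hb'⟩)
      · exact ⟨hu, h.trans hqr⟩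
      · exact ⟨hu, by rw [abs_of_pos (hq.trans ha')]; exact hb'⟩
      · refine ⟨hu, ?_⟩
        rw [abs_of_neg (by linarith : u < 0)]
        linarith
  have hd2 : Disjoint (γ ∩ Set.Ioc q r) (γ ∩ Set.Ico (-r) (-q)) := by
    rw [Set.disjoint_left]
    rintro u ⟨_, hu1, _⟩ ⟨_, _, hu2⟩
    linarith
  have hd1 : Disjoint {u ∈ γ | |u| ≤ q} ((γ ∩ Set.Ioc q r) ∪ (γ ∩ Set.Ico (-r) (-q))) := by
    rw [Set.disjoint_left]
    rintro u ⟨_, huq⟩ (⟨_, hu1, _⟩ | ⟨_, _, hu2⟩)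
    · have := le_abs_self u; linarith
    · have := neg_abs_le u; linarith
  rw [FF, FF, hset, finsum_mem_union hd1 h1 (h2.union h3), finsum_mem_union hd2 h2 h3]

lemma count_block (γ : Set ℝ) (hfin : ∀ q r : ℝ, (γ ∩ Set.Ioc q r).Finite) (j : ℕ) :
    ((γ ∩ Set.Ioc (tt j) (tt (j+1))).ncard : ℝ) = 1/2 + DD γ (j+1) - DD γ j := by
  have h1 : Set.Ioc 0 (tt j) ∪ Set.Ioc (tt j) (tt (j+1)) = Set.Ioc 0 (tt (j+1)) :=
    Set.Ioc_union_Ioc_eq_Ioc (tt_pos j).le (tt_le_succ j)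
  have h2 : γ ∩ Set.Ioc 0 (tt (j+1)) = (γ ∩ Set.Ioc 0 (tt j)) ∪ (γ ∩ Set.Ioc (tt j) (tt (j+1))) := by
    rw [← Set.inter_union_distrib_left, h1]
  have hd : Disjoint (γ ∩ Set.Ioc 0 (tt j)) (γ ∩ Set.Ioc (tt j) (tt (j+1))) := by
    rw [Set.disjoint_left]
    rintro u ⟨_, _, h⟩ ⟨_, h', _⟩
    linarith
  have h3 : (γ ∩ Set.Ioc 0 (tt (j+1))).ncard
      = (γ ∩ Set.Ioc 0 (tt j)).ncard + (γ ∩ Set.Ioc (tt j) (tt (j+1))).ncard := by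
    rw [h2, Set.ncard_union_eq hd (hfin _ _) (hfin _ _)]
  have h4 : ((γ ∩ Set.Ioc 0 (tt (j+1))).ncard : ℝ)
      = ((γ ∩ Set.Ioc 0 (tt j)).ncard : ℝ) + ((γ ∩ Set.Ioc (tt j) (tt (j+1))).ncard : ℝ) := by
    rw [h3]; push_cast; ring
  have h5 := tt_succ j
  unfold DD
  linarith

lemma count_block' (γ : Set ℝ) (hfin : ∀ q r : ℝ, (γ ∩ Set.Ico q r).Finite) (j : ℕ) :
    ((γ ∩ Set.Ico (-(tt (j+1))) (-(tt j))).ncard : ℝ) = 1/2 + DD' γ (j+1) - DD' γ j := by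
  have h1 : Set.Ico (-(tt (j+1))) (-(tt j)) ∪ Set.Ico (-(tt j)) 0 = Set.Ico (-(tt (j+1))) 0 :=
    Set.Ico_union_Ico_eq_Ico (neg_le_neg (tt_le_succ j)) (by linarith [tt_pos j])
  have h2 : γ ∩ Set.Ico (-(tt (j+1))) 0
      = (γ ∩ Set.Ico (-(tt (j+1))) (-(tt j))) ∪ (γ ∩ Set.Ico (-(tt j)) 0) := by
    rw [← Set.inter_union_distrib_left, h1]
  have hd : Disjoint (γ ∩ Set.Ico (-(tt (j+1))) (-(tt j))) (γ ∩ Set.Ico (-(tt j)) 0) := by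
    rw [Set.disjoint_left]
    rintro u ⟨_, _, h⟩ ⟨_, h', _⟩
    linarith
  have h3 : (γ ∩ Set.Ico (-(tt (j+1))) 0).ncard
      = (γ ∩ Set.Ico (-(tt (j+1))) (-(tt j))).ncard + (γ ∩ Set.Ico (-(tt j)) 0).ncard := by
    rw [h2, Set.ncard_union_eq hd (hfin _ _) (hfin _ _)]
  have h4 : ((γ ∩ Set.Ico (-(tt (j+1))) 0).ncard : ℝ)
      = ((γ ∩ Set.Ico (-(tt (j+1))) (-(tt j))).ncard : ℝ)
        + ((γ ∩ Set.Ico (-(tt j)) 0).ncard : ℝ) := by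
    rw [h3]; push_cast; ring
  have h5 := tt_succ j
  unfold DD'
  linarith

lemma log_taylor_bdd {y : ℝ} (h : |y| ≤ 1/2) :
    |Real.log (1-y) + y| ≤ 2*y^2 ∧ |Real.log (1-y)| ≤ 2*|y| := by
  have h1 : |y| < 1 := lt_of_le_of_lt h (by norm_num)
  have h2 : (1:ℝ)/2 ≤ 1 - |y| := by linarith
  constructor
  · have := Real.abs_log_sub_add_sum_range_le h1 1
    simp [Finset.sum_range_one] at this
    calc |Real.log (1-y) + y| = |y + Real.log (1-y)| := by rw [add_comm]
    _ ≤ y^2 / (1-|y|) := this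
    _ ≤ y^2 / (1/2) := by
        apply div_le_div_of_nonneg_left (by positivity) (by norm_num) h2
    _ = 2*y^2 := by ring
  · have := Real.abs_log_sub_add_sum_range_le h1 0
    simp [Finset.sum_range_one] at this
    calc |Real.log (1-y)| ≤ |y| / (1-|y|) := this
    _ ≤ |y| / (1/2) := by
        apply div_le_div_of_nonneg_left (abs_nonneg y) (by norm_num) h2
    _ = 2*|y| := by ring

lemma base_est {x u T : ℝ} (hT : 0 < T) (hx2 : 2*|x| ≤ T) (hu : T < |u|) :
    abs (lg x u + x/u) ≤ 2*x^2/T^2 ∧ abs (lg x u) ≤ 2*|x|/T := by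
  have hu0 : (0:ℝ) < |u| := hT.trans hu
  have hy : |x/u| ≤ 1/2 := by
    rw [abs_div, div_le_div_iff₀ hu0 (by norm_num)]
    nlinarith [abs_nonneg x]
  have hy1 : |x/u| < 1 := lt_of_le_of_lt hy (by norm_num)
  have hpos : 0 < 1 - x/u := by
    have := (abs_lt.mp hy1).2
    linarith
  have habs : |1 - x/u| = 1 - x/u := abs_of_pos hpos
  obtain ⟨e1, e2⟩ := log_taylor_bdd hy
  rw [lg, habs]
  have hT2 : T^2 ≤ u^2 := by nlinarith [abs_nonneg u, sq_abs u]
  constructor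
  · refine e1.trans ?_
    have hxu : x^2/u^2 ≤ x^2/T^2 :=
      div_le_div_of_nonneg_left (sq_nonneg x) (by positivity) hT2
    calc 2*(x/u)^2 = 2*(x^2/u^2) := by rw [div_pow]
    _ ≤ 2*(x^2/T^2) := by linarith
    _ = 2*x^2/T^2 := by ring
  · refine e2.trans ?_
    have hxu : |x|/|u| ≤ |x|/T := div_le_div_of_nonneg_left (abs_nonneg x) hT hu.le
    calc 2*|x/u| = 2*(|x|/|u|) := by rw [abs_div]
    _ ≤ 2*(|x|/T) := by linarith
    _ = 2*|x|/T := by ring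

lemma est_pos {x u T s : ℝ} (hT : 0 < T) (hx2 : 2*|x| ≤ T) (hu : T < u) (hus : u ≤ s)
    (hs : s ≤ T + 1/2) :
    abs (lg x u + x/s) ≤ (2*x^2 + |x|)/T^2 := by
  have huabs : T < |u| := by rwa [abs_of_pos (hT.trans hu)]
  obtain ⟨e1, _⟩ := base_est hT hx2 huabs
  have hu0 : 0 < u := hT.trans hu
  have hs0 : 0 < s := lt_of_lt_of_le hu0 hus
  have hd1 : 1/s ≤ 1/u := one_div_le_one_div_of_le hu0 hus
  have hd2 : 1/u ≤ 1/T := one_div_le_one_div_of_le hT hu.le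
  have hd3 : 1/T - 1/s ≤ 1/T^2 := by
    have h4 : 1/T - 1/s = (s - T)/(T*s) := by field_simp
    have h5 : (s - T)/(T*s) ≤ (1/2)/(T*T) := by
      apply div_le_div₀ (by positivity) (by linarith) (by positivity)
      nlinarith
    have h6 : (1/2)/(T*T) ≤ 1/T^2 := by
      rw [div_le_div_iff₀ (by positivity) (by positivity)]
      nlinarith
    linarith
  have hdiff : |x/u - x/s| ≤ |x|/T^2 := by
    have h1 : x/u - x/s = x * (1/u - 1/s) := by ring
    rw [h1, abs_mul, abs_of_nonneg (by linarith : (0:ℝ) ≤ 1/u - 1/s)]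
    calc |x| * (1/u - 1/s) ≤ |x| * (1/T^2) := by
          apply mul_le_mul_of_nonneg_left (by linarith) (abs_nonneg x)
    _ = |x|/T^2 := by ring
  calc abs (lg x u + x/s)
      = abs ((lg x u + x/u) - (x/u - x/s)) := by ring_nf
  _ ≤ abs (lg x u + x/u) + |x/u - x/s| := abs_sub _ _
  _ ≤ 2*x^2/T^2 + |x|/T^2 := add_le_add e1 hdiff
  _ = (2*x^2 + |x|)/T^2 := by ring

lemma est_neg {x u T s : ℝ} (hT : 0 < T) (hx2 : 2*|x| ≤ T) (hu : -s ≤ u) (hus : u < -T)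
    (hs : s ≤ T + 1/2) :
    abs (lg x u - x/s) ≤ (2*x^2 + |x|)/T^2 := by
  have hu0 : u < 0 := by linarith
  have huabs : T < |u| := by rw [abs_of_neg hu0]; linarith
  obtain ⟨e1, _⟩ := base_est hT hx2 huabs
  have hv : T < -u := by linarith
  have hvs : -u ≤ s := by linarith
  have hs0 : 0 < s := by linarith
  have hd1 : 1/s ≤ 1/(-u) := one_div_le_one_div_of_le (by linarith) hvs
  have hd2 : 1/(-u) ≤ 1/T := one_div_le_one_div_of_le hT hv.le
  have hd3 : 1/T - 1/s ≤ 1/T^2 := by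
    have h4 : 1/T - 1/s = (s - T)/(T*s) := by field_simp
    have h5 : (s - T)/(T*s) ≤ (1/2)/(T*T) := by
      apply div_le_div₀ (by positivity) (by linarith) (by positivity)
      nlinarith
    have h6 : (1/2)/(T*T) ≤ 1/T^2 := by
      rw [div_le_div_iff₀ (by positivity) (by positivity)]
      nlinarith
    linarith
  have hdiff : |x/u + x/s| ≤ |x|/T^2 := by
    have hkey : 1/u + 1/s = -(1/(-u) - 1/s) := by
      rw [one_div_neg_eq_neg_one_div]
      ring
    have h1 : x/u + x/s = x * (1/u + 1/s) := by ring
    rw [h1, abs_mul, hkey, abs_neg, abs_of_nonneg (by linarith : (0:ℝ) ≤ 1/(-u) - 1/s)]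
    calc |x| * (1/(-u) - 1/s) ≤ |x| * (1/T^2) := by
          apply mul_le_mul_of_nonneg_left (by linarith) (abs_nonneg x)
    _ = |x|/T^2 := by ring
  calc abs (lg x u - x/s)
      = abs ((lg x u + x/u) - (x/u + x/s)) := by ring_nf
  _ ≤ abs (lg x u + x/u) + |x/u + x/s| := abs_sub _ _
  _ ≤ 2*x^2/T^2 + |x|/T^2 := add_le_add e1 hdiff
  _ = (2*x^2 + |x|)/T^2 := by ring

lemma tendsto_of_telescope (s B : ℕ → ℝ) (hB : Tendsto B atTop (nhds 0))
    (hw : Summable fun j => s (j+1) - s j - (B (j+1) - B j)) :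
    ∃ L : ℝ, Tendsto s atTop (nhds L) := by
  obtain ⟨W, hW⟩ := hw
  refine ⟨s 0 - B 0 + W, ?_⟩
  have h1 : ∀ m, s m = s 0 + (B m - B 0) +
      ∑ j ∈ Finset.range m, (s (j+1) - s j - (B (j+1) - B j)) := by
    intro m
    induction m with
    | zero => simp
    | succ n ih => rw [Finset.sum_range_succ]; linarith
  have h2 : Tendsto (fun m => s 0 + (B m - B 0) +
      ∑ j ∈ Finset.range m, (s (j+1) - s j - (B (j+1) - B j))) atTop
      (nhds (s 0 + (0 - B 0) + W)) := by
    exact (tendsto_const_nhds.add (hB.sub tendsto_const_nhds)).add hW.tendsto_sum_nat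
  simp only [← h1] at h2
  convert h2 using 2
  ring

set_option maxHeartbeats 2000000 in
/-- **Existence and positivity of the exterior weight** (deterministic content of
part (B) of Theorems 1.1 and 2.1): for a locally finite set `γ` avoiding `(-a, a)`
with controlled discrepancies, the limit `lim_p Σ_{u ∈ γ, |u| ≤ p} log|1 - x/u|`
exists and is finite; consequently for every `β > 0` the weight
`ω(x) = lim_p ∏_{u ∈ γ, |u| ≤ p} |1 - x/u|^β` exists and is positive. -/
theorem exterior_weight_exists
    (a : ℝ) (ha : 0 < a) (γ : Set ℝ)
    (hloc : ∀ K : Set ℝ, IsCompact K → (γ ∩ K).Finite)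
    (hdisj : γ ∩ Set.Ioo (-a) a = ∅)
    (hD : Tendsto (fun t : ℝ => (((γ ∩ Set.Ioc 0 t).ncard : ℝ) - t) / t) atTop (nhds 0))
    (hD' : Tendsto (fun t : ℝ => (((γ ∩ Set.Ico (-t) 0).ncard : ℝ) - t) / t) atTop (nhds 0))
    (hS : Summable fun j : ℕ =>
      |((γ ∩ Set.Ioc 0 (((j : ℝ) + 2) / 2)).ncard : ℝ) - ((j : ℝ) + 2) / 2| / ((j : ℝ) + 1) ^ 2)
    (hS' : Summable fun j : ℕ =>
      |((γ ∩ Set.Ico (-(((j : ℝ) + 2) / 2)) 0).ncard : ℝ) - ((j : ℝ) + 2) / 2| / ((j : ℝ) + 1) ^ 2)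
    (x : ℝ) (hx : x ∈ Set.Ioo (-a) a) :
    (∃ L : ℝ, Tendsto (fun p : ℝ => ∑ᶠ u ∈ {u ∈ γ | |u| ≤ p}, Real.log |1 - x / u|)
        atTop (nhds L)) ∧
    ∀ β : ℝ, 0 < β → ∃ ω : ℝ, 0 < ω ∧
      Tendsto (fun p : ℝ => ∏ᶠ u ∈ {u ∈ γ | |u| ≤ p}, |1 - x / u| ^ β)
        atTop (nhds ω) := by
  obtain ⟨hx1, hx2'⟩ := hx
  have hxa : |x| < a := abs_lt.mpr ⟨hx1, hx2'⟩
  have hγa : ∀ u ∈ γ, a ≤ |u| := by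
    intro u hu
    by_contra hcon
    push_neg at hcon
    have hmem : u ∈ γ ∩ Set.Ioo (-a) a := ⟨hu, abs_lt.mp hcon⟩
    rw [hdisj] at hmem
    exact hmem
  have hpos : ∀ u ∈ γ, 0 < 1 - x / u := by
    intro u hu
    have h1 : 0 < |u| := lt_of_lt_of_le ha (hγa u hu)
    have h2 : |x / u| < 1 := by
      rw [abs_div, div_lt_one h1]
      exact lt_of_lt_of_le hxa (hγa u hu)
    have := (abs_lt.mp h2).2
    linarith
  -- finiteness
  have hfinsep : ∀ p : ℝ, {u ∈ γ | |u| ≤ p}.Finite := by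
    intro p
    refine ((hloc (Set.Icc (-p) p) isCompact_Icc).subset ?_)
    rintro u ⟨hu, hup⟩
    exact ⟨hu, Set.mem_Icc.mpr (abs_le.mp hup)⟩
  have hfinIoc : ∀ q r : ℝ, (γ ∩ Set.Ioc q r).Finite := fun q r =>
    (hloc (Set.Icc q r) isCompact_Icc).subset
      (Set.inter_subset_inter_right _ Set.Ioc_subset_Icc_self)
  have hfinIco : ∀ q r : ℝ, (γ ∩ Set.Ico q r).Finite := fun q r =>
    (hloc (Set.Icc q r) isCompact_Icc).subset
      (Set.inter_subset_inter_right _ Set.Ico_subset_Icc_self)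
  -- tt tends to atTop
  have httop : Tendsto tt atTop atTop := by
    refine tendsto_atTop_atTop.mpr fun b => ?_
    obtain ⟨n, hn⟩ := exists_nat_ge (2*b)
    refine ⟨n, fun m hm => ?_⟩
    have h1 : tt n ≤ tt m := tt_mono hm
    have h2 : b ≤ tt n := by unfold tt; linarith
    linarith
  -- discrepancy limits along tt
  have hDj : Tendsto (fun j : ℕ => DD γ j / tt j) atTop (nhds 0) :=
    (hD.comp httop).congr fun j => rfl
  have hD'j : Tendsto (fun j : ℕ => DD' γ j / tt j) atTop (nhds 0) :=
    (hD'.comp httop).congr fun j => rfl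
  have hDja : Tendsto (fun j : ℕ => |DD γ j| / tt j) atTop (nhds 0) := by
    have h := hDj.abs
    rw [abs_zero] at h
    refine h.congr fun j => ?_
    rw [abs_div, abs_of_pos (tt_pos j)]
  have hD'ja : Tendsto (fun j : ℕ => |DD' γ j| / tt j) atTop (nhds 0) := by
    have h := hD'j.abs
    rw [abs_zero] at h
    refine h.congr fun j => ?_
    rw [abs_div, abs_of_pos (tt_pos j)]
  have hshift_tendsto : ∀ g : ℕ → ℝ, Tendsto (fun j : ℕ => |g j| / tt j) atTop (nhds 0) →
      Tendsto (fun j : ℕ => |g (j+1)| / tt j) atTop (nhds 0) := by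
    intro g hg
    have h : Tendsto (fun j : ℕ => 2*(|g (j+1)|/tt (j+1))) atTop (nhds (2*0)) :=
      (hg.comp (tendsto_add_atTop_nat 1)).const_mul 2
    rw [mul_zero] at h
    refine squeeze_zero (fun j => div_nonneg (abs_nonneg _) (tt_pos j).le) (fun j => ?_) h
    have h1 := tt_succ_le_two j
    have h2 := tt_pos j
    have h3 := tt_pos (j+1)
    have h5 : 2*(|g (j+1)|/tt (j+1)) = (2*|g (j+1)|)/tt (j+1) := by ring
    rw [h5, div_le_div_iff₀ h2 h3]
    nlinarith [mul_le_mul_of_nonneg_left h1 (abs_nonneg (g (j+1)))]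
  have hDja1 := hshift_tendsto (DD γ) hDja
  have hD'ja1 := hshift_tendsto (DD' γ) hD'ja
  -- choice of j0
  obtain ⟨j0, hj0⟩ := (httop.eventually_ge_atTop (2*|x|)).exists
  have htj : ∀ j, j0 ≤ j → 2*|x| ≤ tt j := fun j hj => hj0.trans (tt_mono hj)
  -- summability components
  have hquad : Summable (fun j : ℕ => 1/((j:ℝ)+1)^2) := by
    have h := (summable_nat_add_iff 1).mpr (summable_one_div_nat_pow.mpr one_lt_two)
    refine h.congr fun j => ?_
    push_cast
    ring
  have hsq : Summable (fun j : ℕ => 1/(tt j)^2) := by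
    refine Summable.of_nonneg_of_le (fun j => by positivity) (fun j => ?_) (hquad.mul_left 4)
    have htsq : ((j:ℝ)+1)^2 ≤ 4*(tt j)^2 := by
      have h0 : (0:ℝ) ≤ (j:ℝ) := Nat.cast_nonneg j
      unfold tt
      nlinarith
    have h1 : 4 * (1 / ((j:ℝ)+1)^2) = 4 / ((j:ℝ)+1)^2 := by ring
    rw [h1, div_le_div_iff₀ (pow_pos (tt_pos j) 2) (by positivity)]
    nlinarith
  have hcomp : ∀ g : ℕ → ℝ, Summable (fun j => |g j| / ((j:ℝ)+1)^2) →
      (Summable (fun j => |g j| / (tt j)^2) ∧ Summable (fun j => |g (j+1)| / (tt j)^2)) := by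
    intro g hg
    constructor
    · refine Summable.of_nonneg_of_le (fun j => by positivity) (fun j => ?_) (hg.mul_left 4)
      have htsq : ((j:ℝ)+1)^2 ≤ 4*(tt j)^2 := by
        have h0 : (0:ℝ) ≤ (j:ℝ) := Nat.cast_nonneg j
        unfold tt
        nlinarith
      have h1 : 4 * (|g j| / ((j:ℝ)+1)^2) = (4*|g j|) / ((j:ℝ)+1)^2 := by ring
      rw [h1, div_le_div_iff₀ (pow_pos (tt_pos j) 2) (by positivity)]
      nlinarith [mul_le_mul_of_nonneg_left htsq (abs_nonneg (g j))]
    · have hg1 : Summable (fun j : ℕ => |g (j+1)| / ((j:ℝ)+2)^2) := by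
        refine ((summable_nat_add_iff 1).mpr hg).congr fun j => ?_
        push_cast
        ring
      refine Summable.of_nonneg_of_le (fun j => by positivity) (fun j => ?_) (hg1.mul_left 4)
      have htsq2 : ((j:ℝ)+2)^2 ≤ 4*(tt j)^2 := by
        have h0 : (0:ℝ) ≤ (j:ℝ) := Nat.cast_nonneg j
        unfold tt
        nlinarith
      have h1 : 4 * (|g (j+1)| / ((j:ℝ)+2)^2) = (4*|g (j+1)|) / ((j:ℝ)+2)^2 := by ring
      rw [h1, div_le_div_iff₀ (pow_pos (tt_pos j) 2) (by positivity)]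
      nlinarith [mul_le_mul_of_nonneg_left htsq2 (abs_nonneg (g (j+1)))]
  obtain ⟨hA0, hA1⟩ := hcomp (DD γ) (hS.congr fun _ => rfl)
  obtain ⟨hB0, hB1⟩ := hcomp (DD' γ) (hS'.congr fun _ => rfl)
  have hbnd : Summable (fun j : ℕ => (1/2 + |DD γ j| + |DD γ (j+1)|) * ((2*x^2+|x|)/(tt j)^2)
      + (1/2 + |DD' γ j| + |DD' γ (j+1)|) * ((2*x^2+|x|)/(tt j)^2)
      + |x| * ((|DD' γ j| + |DD γ j|) * (1/(tt j)^2))) := by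
    have h1 := hsq.mul_left (2*x^2+|x|)
    have h2 := hA0.mul_left (2*x^2+|x|)
    have h3 := hA1.mul_left (2*x^2+|x|)
    have h4 := hB0.mul_left (2*x^2+|x|)
    have h5 := hB1.mul_left (2*x^2+|x|)
    have h6 := hB0.mul_left |x|
    have h7 := hA0.mul_left |x|
    refine ((((((h1.add h2).add h3).add h4).add h5).add h6).add h7).congr fun j => ?_
    ring
  -- the key block bound
  have hw_bound : ∀ j : ℕ, j0 ≤ j →
      |FF γ x (tt (j+1)) - FF γ x (tt j)
        - (x*(DD' γ (j+1) - DD γ (j+1))/tt (j+1) - x*(DD' γ j - DD γ j)/tt j)|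
      ≤ (1/2 + |DD γ j| + |DD γ (j+1)|) * ((2*x^2+|x|)/(tt j)^2)
        + (1/2 + |DD' γ j| + |DD' γ (j+1)|) * ((2*x^2+|x|)/(tt j)^2)
        + |x| * ((|DD' γ j| + |DD γ j|) * (1/(tt j)^2)) := by
    intro j hj
    have hT := tt_pos j
    have hT' := tt_pos (j+1)
    have hx2 : 2*|x| ≤ tt j := htj j hj
    have hts : tt (j+1) = tt j + 1/2 := tt_succ j
    have hfp := hfinIoc (tt j) (tt (j+1))
    have hfm := hfinIco (-(tt (j+1))) (-(tt j))
    have hcntP := count_block γ hfinIoc j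
    have hcntM := count_block' γ hfinIco j
    have hsplit := FF_split γ x (tt j) (tt (j+1)) hT (tt_le_succ j) (hfinsep _) hfp hfm
    have hshiftP : (∑ᶠ u ∈ γ ∩ Set.Ioc (tt j) (tt (j+1)), lg x u)
        = (∑ᶠ u ∈ γ ∩ Set.Ioc (tt j) (tt (j+1)), (lg x u + x/tt (j+1)))
          - ((γ ∩ Set.Ioc (tt j) (tt (j+1))).ncard : ℝ) * (x/tt (j+1)) :=
      finsum_shift hfp _ _
    have hshiftM : (∑ᶠ u ∈ γ ∩ Set.Ico (-(tt (j+1))) (-(tt j)), lg x u)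
        = (∑ᶠ u ∈ γ ∩ Set.Ico (-(tt (j+1))) (-(tt j)), (lg x u + -(x/tt (j+1))))
          - ((γ ∩ Set.Ico (-(tt (j+1))) (-(tt j))).ncard : ℝ) * (-(x/tt (j+1))) :=
      finsum_shift hfm _ _
    have hEPb : |∑ᶠ u ∈ γ ∩ Set.Ioc (tt j) (tt (j+1)), (lg x u + x/tt (j+1))|
        ≤ ((γ ∩ Set.Ioc (tt j) (tt (j+1))).ncard : ℝ) * ((2*x^2+|x|)/(tt j)^2) := by
      refine abs_finsum_le hfp _ (fun u hu => ?_)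
      exact est_pos hT hx2 hu.2.1 hu.2.2 (le_of_eq hts)
    have hEMb : |∑ᶠ u ∈ γ ∩ Set.Ico (-(tt (j+1))) (-(tt j)), (lg x u + -(x/tt (j+1)))|
        ≤ ((γ ∩ Set.Ico (-(tt (j+1))) (-(tt j))).ncard : ℝ) * ((2*x^2+|x|)/(tt j)^2) := by
      refine abs_finsum_le hfm _ (fun u hu => ?_)
      have h := est_neg hT hx2 hu.2.1 hu.2.2 (le_of_eq hts)
      rw [sub_eq_add_neg] at h
      exact h
    have hcapP : ((γ ∩ Set.Ioc (tt j) (tt (j+1))).ncard : ℝ)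
        ≤ 1/2 + |DD γ j| + |DD γ (j+1)| := by
      rw [hcntP]
      have h1 := le_abs_self (DD γ (j+1))
      have h2 := neg_abs_le (DD γ j)
      linarith
    have hcapM : ((γ ∩ Set.Ico (-(tt (j+1))) (-(tt j))).ncard : ℝ)
        ≤ 1/2 + |DD' γ j| + |DD' γ (j+1)| := by
      rw [hcntM]
      have h1 := le_abs_self (DD' γ (j+1))
      have h2 := neg_abs_le (DD' γ j)
      linarith
    have hiden : FF γ x (tt (j+1)) - FF γ x (tt j)
        - (x*(DD' γ (j+1) - DD γ (j+1))/tt (j+1) - x*(DD' γ j - DD γ j)/tt j)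
        = (∑ᶠ u ∈ γ ∩ Set.Ioc (tt j) (tt (j+1)), (lg x u + x/tt (j+1)))
          + (∑ᶠ u ∈ γ ∩ Set.Ico (-(tt (j+1))) (-(tt j)), (lg x u + -(x/tt (j+1))))
          + x*(DD' γ j - DD γ j)*(1/tt j - 1/tt (j+1)) := by
      rw [hsplit, hshiftP, hshiftM, hcntP, hcntM]
      generalize (∑ᶠ u ∈ γ ∩ Set.Ioc (tt j) (tt (j+1)), (lg x u + x/tt (j+1))) = A
      generalize (∑ᶠ u ∈ γ ∩ Set.Ico (-(tt (j+1))) (-(tt j)), (lg x u + -(x/tt (j+1)))) = B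
      field_simp
      ring
    rw [hiden]
    have h3 : |x*(DD' γ j - DD γ j)*(1/tt j - 1/tt (j+1))|
        ≤ |x| * ((|DD' γ j| + |DD γ j|) * (1/(tt j)^2)) := by
      rw [abs_mul, abs_mul]
      have e1 : |DD' γ j - DD γ j| ≤ |DD' γ j| + |DD γ j| := abs_sub _ _
      have e2 : |1/tt j - 1/tt (j+1)| ≤ 1/(tt j)^2 := by
        have d1 : 1/tt (j+1) ≤ 1/tt j := one_div_le_one_div_of_le hT (tt_le_succ j)
        rw [abs_of_nonneg (by linarith)]
        have d2 : 1/tt j - 1/tt (j+1) = (1/2)/(tt j * tt (j+1)) := by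
          rw [hts]
          field_simp
          ring
        rw [d2, div_le_div_iff₀ (mul_pos hT hT') (pow_pos hT 2)]
        nlinarith [mul_le_mul_of_nonneg_left (tt_le_succ j) hT.le]
      calc |x| * |DD' γ j - DD γ j| * |1/tt j - 1/tt (j+1)|
          ≤ |x| * (|DD' γ j| + |DD γ j|) * (1/(tt j)^2) := by
            apply mul_le_mul (mul_le_mul_of_nonneg_left e1 (abs_nonneg x)) e2 (abs_nonneg _)
              (by positivity)
        _ = |x| * ((|DD' γ j| + |DD γ j|) * (1/(tt j)^2)) := by ring
    have b1 := hEPb.trans (mul_le_mul_of_nonneg_right hcapP (by positivity))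
    have b2 := hEMb.trans (mul_le_mul_of_nonneg_right hcapM (by positivity))
    refine (abs_add_le _ _).trans (le_trans (add_le_add_left (abs_add_le _ _) _) ?_)
    exact add_le_add (add_le_add b1 b2) h3
  -- summability of the telescoped differences
  have hwsum : Summable (fun j : ℕ => FF γ x (tt (j+1)) - FF γ x (tt j)
      - (x*(DD' γ (j+1) - DD γ (j+1))/tt (j+1) - x*(DD' γ j - DD γ j)/tt j)) := by
    refine (summable_nat_add_iff j0).mp ?_
    refine Summable.of_abs ?_
    refine Summable.of_nonneg_of_le (fun n => abs_nonneg _)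
      (fun n => hw_bound (n+j0) (Nat.le_add_left _ _)) ?_
    exact (summable_nat_add_iff j0).mpr hbnd
  -- limit of B
  have hBt : Tendsto (fun j : ℕ => x*(DD' γ j - DD γ j)/tt j) atTop (nhds 0) := by
    have h := (hD'j.sub hDj).const_mul x
    rw [sub_zero, mul_zero] at h
    refine h.congr fun j => ?_
    ring
  obtain ⟨L, hLseq⟩ := tendsto_of_telescope (fun m => FF γ x (tt m))
    (fun j => x*(DD' γ j - DD γ j)/tt j) hBt hwsum
  -- interpolation between sample points
  have hjp_top : Tendsto (fun p : ℝ => ⌊2*p⌋₊ - 2) atTop atTop := by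
    refine tendsto_atTop_atTop.mpr fun b => ?_
    refine ⟨(b:ℝ)+2, fun p hp => ?_⟩
    have h0 : (0:ℝ) ≤ (b:ℝ) := Nat.cast_nonneg b
    have h1 : ((b+2:ℕ):ℝ) ≤ 2*p := by push_cast; linarith
    have h2 : b+2 ≤ ⌊2*p⌋₊ := Nat.le_floor h1
    omega
  have hgap_bound : ∀ p : ℝ, tt j0 ≤ p →
      |FF γ x p - FF γ x (tt (⌊2*p⌋₊ - 2))|
      ≤ (1/2 + |DD γ (⌊2*p⌋₊-2)| + |DD γ (⌊2*p⌋₊-2+1)|) * (2*|x|/tt (⌊2*p⌋₊-2))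
        + (1/2 + |DD' γ (⌊2*p⌋₊-2)| + |DD' γ (⌊2*p⌋₊-2+1)|) * (2*|x|/tt (⌊2*p⌋₊-2)) := by
    intro p hp
    set j := ⌊2*p⌋₊ - 2 with hjdef
    have hp1 : (1:ℝ) ≤ p := (tt_one_le j0).trans hp
    have hp0 : (0:ℝ) ≤ 2*p := by linarith
    have hfl2 : j0 + 2 ≤ ⌊2*p⌋₊ := by
      apply Nat.le_floor
      have htj0 : tt j0 = ((j0:ℝ)+2)/2 := rfl
      push_cast
      linarith [hp, htj0 ▸ hp]
    have hj0j : j0 ≤ j := by omega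
    have hcast : ((j:ℕ):ℝ) + 2 = (⌊2*p⌋₊ : ℝ) := by
      have h2 : 2 ≤ ⌊2*p⌋₊ := by omega
      rw [hjdef]
      push_cast [Nat.cast_sub h2]
      ring
    have htjp : tt j ≤ p := by
      have h1 : (⌊2*p⌋₊:ℝ) ≤ 2*p := Nat.floor_le hp0
      have h2 : tt j = ((j:ℝ)+2)/2 := rfl
      rw [h2, hcast]
      linarith
    have hpt : p ≤ tt (j+1) := by
      have h1 : 2*p < (⌊2*p⌋₊:ℝ) + 1 := Nat.lt_floor_add_one _
      have h2 : tt (j+1) = (((j:ℝ)+1)+2)/2 := by unfold tt; push_cast; ring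
      rw [h2]
      linarith [hcast]
    have hT := tt_pos j
    have hx2 : 2*|x| ≤ tt j := htj j hj0j
    have hsplit := FF_split γ x (tt j) p hT htjp (hfinsep _) (hfinIoc _ _) (hfinIco _ _)
    have hcard1 : ((γ ∩ Set.Ioc (tt j) p).ncard : ℝ) ≤ 1/2 + |DD γ j| + |DD γ (j+1)| := by
      have hsub : γ ∩ Set.Ioc (tt j) p ⊆ γ ∩ Set.Ioc (tt j) (tt (j+1)) :=
        Set.inter_subset_inter_right _ (Set.Ioc_subset_Ioc_right hpt)
      have h1 : (γ ∩ Set.Ioc (tt j) p).ncard ≤ (γ ∩ Set.Ioc (tt j) (tt (j+1))).ncard :=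
        Set.ncard_le_ncard hsub (hfinIoc _ _)
      have h2 := count_block γ hfinIoc j
      have h3 := le_abs_self (DD γ (j+1))
      have h4 := neg_abs_le (DD γ j)
      have hc : ((γ ∩ Set.Ioc (tt j) p).ncard : ℝ)
          ≤ ((γ ∩ Set.Ioc (tt j) (tt (j+1))).ncard : ℝ) := Nat.cast_le.mpr h1
      linarith
    have hcard2 : ((γ ∩ Set.Ico (-p) (-(tt j))).ncard : ℝ)
        ≤ 1/2 + |DD' γ j| + |DD' γ (j+1)| := by
      have hsub : γ ∩ Set.Ico (-p) (-(tt j)) ⊆ γ ∩ Set.Ico (-(tt (j+1))) (-(tt j)) :=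
        Set.inter_subset_inter_right _ (Set.Ico_subset_Ico_left (neg_le_neg hpt))
      have h1 : (γ ∩ Set.Ico (-p) (-(tt j))).ncard
          ≤ (γ ∩ Set.Ico (-(tt (j+1))) (-(tt j))).ncard :=
        Set.ncard_le_ncard hsub (hfinIco _ _)
      have h2 := count_block' γ hfinIco j
      have h3 := le_abs_self (DD' γ (j+1))
      have h4 := neg_abs_le (DD' γ j)
      have hc : ((γ ∩ Set.Ico (-p) (-(tt j))).ncard : ℝ)
          ≤ ((γ ∩ Set.Ico (-(tt (j+1))) (-(tt j))).ncard : ℝ) := Nat.cast_le.mpr h1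
      linarith
    have bP : |∑ᶠ u ∈ γ ∩ Set.Ioc (tt j) p, lg x u|
        ≤ ((γ ∩ Set.Ioc (tt j) p).ncard : ℝ) * (2*|x|/tt j) := by
      refine abs_finsum_le (hfinIoc _ _) _ (fun u hu => ?_)
      have habs : tt j < |u| := by
        rw [abs_of_pos (hT.trans hu.2.1)]
        exact hu.2.1
      exact (base_est hT hx2 habs).2
    have bM : |∑ᶠ u ∈ γ ∩ Set.Ico (-p) (-(tt j)), lg x u|
        ≤ ((γ ∩ Set.Ico (-p) (-(tt j))).ncard : ℝ) * (2*|x|/tt j) := by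
      refine abs_finsum_le (hfinIco _ _) _ (fun u hu => ?_)
      have hu0 : u < 0 := lt_trans hu.2.2 (by linarith)
      have habs : tt j < |u| := by
        rw [abs_of_neg hu0]
        linarith [hu.2.2]
      exact (base_est hT hx2 habs).2
    rw [hsplit, add_sub_cancel_left]
    refine (abs_add_le _ _).trans ?_
    exact add_le_add (bP.trans (mul_le_mul_of_nonneg_right hcard1 (by positivity)))
      (bM.trans (mul_le_mul_of_nonneg_right hcard2 (by positivity)))
  have hδt : Tendsto (fun j : ℕ => (1/2 + |DD γ j| + |DD γ (j+1)|) * (2*|x|/tt j)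
      + (1/2 + |DD' γ j| + |DD' γ (j+1)|) * (2*|x|/tt j)) atTop (nhds 0) := by
    have h0t : Tendsto (fun j : ℕ => 1/tt j) atTop (nhds 0) := by
      have h := httop.inv_tendsto_atTop
      refine h.congr fun j => ?_
      simp [one_div]
    have c1 : Tendsto (fun j : ℕ => (1/2)*(1/tt j) + |DD γ j|/tt j + |DD γ (j+1)|/tt j)
        atTop (nhds ((1/2)*0+0+0)) := ((h0t.const_mul _).add hDja).add hDja1
    have c2 : Tendsto (fun j : ℕ => (1/2)*(1/tt j) + |DD' γ j|/tt j + |DD' γ (j+1)|/tt j)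
        atTop (nhds ((1/2)*0+0+0)) := ((h0t.const_mul _).add hD'ja).add hD'ja1
    have hsum := (c1.const_mul (2*|x|)).add (c2.const_mul (2*|x|))
    have hz : (2*|x|)*((1/2)*0+0+0) + (2*|x|)*((1/2)*0+0+0) = 0 := by ring
    rw [hz] at hsum
    refine hsum.congr fun j => ?_
    field_simp
  -- convergence of FF along ℝ
  have hFtend : Tendsto (FF γ x) atTop (nhds L) := by
    have h1 : Tendsto (fun p : ℝ => FF γ x (tt (⌊2*p⌋₊ - 2))) atTop (nhds L) :=
      hLseq.comp hjp_top
    have h2 : Tendsto (fun p : ℝ => FF γ x p - FF γ x (tt (⌊2*p⌋₊ - 2))) atTop (nhds 0) := by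
      refine squeeze_zero_norm' ?_ (hδt.comp hjp_top)
      filter_upwards [eventually_ge_atTop (tt j0)] with p hp
      simpa [Real.norm_eq_abs] using hgap_bound p hp
    have h3 := h1.add h2
    rw [add_zero] at h3
    refine h3.congr fun p => ?_
    ring
  constructor
  · exact ⟨L, hFtend.congr fun p => rfl⟩
  · intro β hβ
    refine ⟨Real.exp (β * L), Real.exp_pos _, ?_⟩
    have hprod : ∀ p : ℝ, ∏ᶠ u ∈ {u ∈ γ | |u| ≤ p}, |1 - x/u| ^ β = Real.exp (β * FF γ x p) := by
      intro p
      rw [FF, finprod_mem_eq_finite_toFinset_prod _ (hfinsep p),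
        finsum_mem_eq_finite_toFinset_sum _ (hfinsep p), Finset.mul_sum, Real.exp_sum]
      refine Finset.prod_congr rfl fun u hu => ?_
      have huγ : u ∈ γ := ((hfinsep p).mem_toFinset.mp hu).1
      have h1 : (0:ℝ) < |1 - x/u| := abs_pos.mpr (hpos u huγ).ne'
      rw [Real.rpow_def_of_pos h1, lg, mul_comm]
    have h := (Real.continuous_exp.tendsto _).comp (hFtend.const_mul β)
    refine Tendsto.congr (fun p => (hprod p).symm) ?_
    exact h.congr fun p => rfl
end
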